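/- arXiv:2506.09261 — 12 statements merged into one kernel-verified Lean document; each statement's English description precedes it below -/
import Mathlib

section
/- Let (X,d) be a compact metric space and f : X → X an arbitrary (not necessarily continuous) self-map. Then there exists a point x ∈ X that is chain-recurrent, i.e., for every ε > 0 there exist n ≥ 1 and points x₀, x₁, …, xₙ with x₀ = xₙ = x and d(f(xᵢ), xᵢ₊₁) < ε for all i = 0, …, n−1. -/
open Filter Topology Set

variable {X : Type*}

section Defs
variable [PseudoMetricSpace X]

def IsEpsChain (f : X → X) (ε : ℝ) (n : ℕ) (c : ℕ → X) (x y : X) : Prop :=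
  1 ≤ n ∧ c 0 = x ∧ c n = y ∧ ∀ i < n, dist (f (c i)) (c (i + 1)) < ε

def EpsChain (f : X → X) (ε : ℝ) (x y : X) : Prop :=
  ∃ n c, IsEpsChain f ε n c x y

/-- The chain relation `x 𝒞 y`. -/
def ChainRel (f : X → X) (x y : X) : Prop :=
  ∀ ε > 0, EpsChain f ε x y

def EpsChainIn (f : X → X) (S : Set X) (ε : ℝ) (x y : X) : Prop :=
  ∃ n c, IsEpsChain f ε n c x y ∧ ∀ i ≤ n, c i ∈ S

def ChainRelIn (f : X → X) (S : Set X) (x y : X) : Prop :=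
  ∀ ε > 0, EpsChainIn f S ε x y

def InternallyChainTransitive (f : X → X) (S : Set X) : Prop :=
  ∀ x ∈ S, ∀ y ∈ S, ∀ ε > 0, EpsChainIn f S ε x y

/-- The nested-chain relation `x 𝒞⊆ y`. -/
def NestedChainRel (f : X → X) (x y : X) : Prop :=
  ∃ ε : ℕ → ℝ, (∀ n, 0 < ε n) ∧ Antitone ε ∧ Tendsto ε atTop (𝓝 0) ∧
    ∃ N : ℕ → ℕ, ∃ c : ℕ → ℕ → X,
      (∀ n, IsEpsChain f (ε n) (N n) (c n) x y) ∧
      ∀ n, c n '' Set.Iic (N n) ⊆ c (n + 1) '' Set.Iic (N (n + 1))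

/-- The nested-chain relation with all chain points inside `S`. -/
def NestedChainRelIn (f : X → X) (S : Set X) (x y : X) : Prop :=
  ∃ ε : ℕ → ℝ, (∀ n, 0 < ε n) ∧ Antitone ε ∧ Tendsto ε atTop (𝓝 0) ∧
    ∃ N : ℕ → ℕ, ∃ c : ℕ → ℕ → X,
      (∀ n, IsEpsChain f (ε n) (N n) (c n) x y ∧ ∀ i ≤ N n, c n i ∈ S) ∧
      ∀ n, c n '' Set.Iic (N n) ⊆ c (n + 1) '' Set.Iic (N (n + 1))

end Defs

/-- Strong `(ε,d)`-chain for an explicitly given distance function `d`. -/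
def StrongEpsChainWith (d : X → X → ℝ) (f : X → X) (ε : ℝ) (x y : X) : Prop :=
  ∃ n, 1 ≤ n ∧ ∃ c : ℕ → X, c 0 = x ∧ c n = y ∧
    (∑ i ∈ Finset.range n, d (f (c i)) (c (i + 1))) < ε

/-- The strong chain relation `x 𝒮𝒞_d y`. -/
def StrongChainRelWith (d : X → X → ℝ) (f : X → X) (x y : X) : Prop :=
  ∀ ε > 0, StrongEpsChainWith d f ε x y

section Work
variable [MetricSpace X]

def Omega' (f : X → X) (x : X) : Set X := {y | ChainRel f x y}

lemma mem_omega'_self (f : X → X) (x : X) : f x ∈ Omega' f x := by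
  intro ε hε
  refine ⟨1, fun i => if i = 0 then x else f x, le_refl 1, by simp, by simp, ?_⟩
  intro i hi
  interval_cases i
  simpa using hε

lemma epsChain_trans {f : X → X} {ε : ℝ} {x y z : X}
    (h1 : EpsChain f ε x y) (h2 : EpsChain f ε y z) : EpsChain f ε x z := by
  obtain ⟨n, c, hn, hc0, hcn, hstep⟩ := h1
  obtain ⟨m, c', hm, hc0', hcm', hstep'⟩ := h2
  refine ⟨n + m, fun i => if i ≤ n then c i else c' (i - n), ?_, ?_, ?_, ?_⟩
  · omega
  · simp [hc0]
  · have : ¬ (n + m ≤ n) := by omega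
    simp only [this, if_false]
    simpa using hcm'
  · intro i hi
    by_cases h : i + 1 ≤ n
    · have hi' : i ≤ n := by omega
      simp only [hi', h, if_true]
      exact hstep i (by omega)
    · by_cases h2 : i = n
      · have hii : i ≤ n := le_of_eq h2
        have h4 : i + 1 - n = 1 := by omega
        simp only [hii, if_true, h, if_false, h4]
        rw [h2, hcn, ← hc0']
        exact hstep' 0 (by omega)
      · have h3 : ¬ (i ≤ n) := by omega
        have h4 : ¬ (i + 1 ≤ n) := by omega
        simp only [h3, h4, if_false]
        have : i + 1 - n = (i - n) + 1 := by omega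
        rw [this]
        exact hstep' (i - n) (by omega)

lemma chainRel_trans {f : X → X} {x y z : X}
    (h1 : ChainRel f x y) (h2 : ChainRel f y z) : ChainRel f x z :=
  fun ε hε => epsChain_trans (h1 ε hε) (h2 ε hε)

lemma omega'_subset {f : X → X} {x y : X} (h : y ∈ Omega' f x) :
    Omega' f y ⊆ Omega' f x := fun _ hz => chainRel_trans h hz

lemma omega'_isClosed (f : X → X) (x : X) : IsClosed (Omega' f x) := by
  rw [← isOpen_compl_iff]
  rw [isOpen_iff_mem_nhds]
  intro y hy
  by_contra hcon
  apply hy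
  have hmem : y ∈ closure (Omega' f x) := by
    rw [Metric.mem_closure_iff]
    intro δ hδ
    by_contra hno
    push_neg at hno
    apply hcon
    rw [Metric.mem_nhds_iff]
    exact ⟨δ, hδ, fun z hz hz' => absurd (hno z hz') (not_le.mpr (by simpa [dist_comm] using hz))⟩
  -- now show closure ⊆ Omega'
  intro ε hε
  obtain ⟨y', hy', hd⟩ := Metric.mem_closure_iff.mp hmem (ε/2) (by linarith)
  obtain ⟨n, c, hn, hc0, hcn, hstep⟩ := hy' (ε/2) (by linarith)
  refine ⟨n, fun i => if i = n then y else c i, hn, ?_, by simp, ?_⟩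
  · have : (0:ℕ) ≠ n := by omega
    simp [this, hc0]
  · intro i hi
    have hine : i ≠ n := by omega
    simp only [hine, if_false]
    by_cases h : i + 1 = n
    · simp only [h, if_pos rfl]
      calc dist (f (c i)) y ≤ dist (f (c i)) (c n) + dist (c n) y := dist_triangle _ _ _
        _ < ε/2 + ε/2 := by
            refine add_lt_add ?_ ?_
            · rw [← h]; exact hstep i hi
            · rw [hcn, dist_comm]; exact hd
        _ = ε := by ring
    · simp only [h, if_false]
      exact lt_trans (hstep i hi) (by linarith)

end Work

theorem stmt0 [MetricSpace X] [CompactSpace X] [Nonempty X] (f : X → X) :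
    ∃ x : X, ChainRel f x x := by
  classical
  set S : Set (Set X) := Set.range (Omega' f) with hS
  have hmin : ∃ m, Minimal (· ∈ S) m := by
    apply zorn_superset
    intro c hcS hchain
    rcases c.eq_empty_or_nonempty with rfl | hne
    · exact ⟨Omega' f (Classical.arbitrary X), ⟨_, rfl⟩, by simp⟩
    · have hZ : (⋂ s : c, (s : Set X)).Nonempty := by
        haveI : Nonempty c := hne.to_subtype
        apply IsCompact.nonempty_iInter_of_directed_nonempty_isCompact_isClosed
        · intro s t
          rcases hchain.total s.2 t.2 with h | h
          · exact ⟨s, subset_refl _, h⟩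
          · exact ⟨t, h, subset_refl _⟩
        · rintro ⟨s, hs⟩
          obtain ⟨a, rfl⟩ := hcS hs
          exact ⟨f a, mem_omega'_self f a⟩
        · rintro ⟨s, hs⟩
          obtain ⟨a, rfl⟩ := hcS hs
          exact (omega'_isClosed f a).isCompact
        · rintro ⟨s, hs⟩
          obtain ⟨a, rfl⟩ := hcS hs
          exact omega'_isClosed f a
      obtain ⟨z, hz⟩ := hZ
      refine ⟨Omega' f z, ⟨z, rfl⟩, ?_⟩
      intro s hs
      obtain ⟨a, rfl⟩ := hcS hs
      exact omega'_subset (Set.mem_iInter.mp hz ⟨_, hs⟩)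
  obtain ⟨m, hmS, hminimal⟩ := hmin
  obtain ⟨x₀, rfl⟩ := hmS
  have h1 : f x₀ ∈ Omega' f x₀ := mem_omega'_self f x₀
  have h2 : Omega' f (f x₀) ⊆ Omega' f x₀ := omega'_subset h1
  have h3 : Omega' f x₀ ⊆ Omega' f (f x₀) := hminimal ⟨f x₀, rfl⟩ h2
  exact ⟨f x₀, h3 h1⟩
end

section
/- Let (X,d) be a compact metric space and f : X → X an arbitrary self-map. Then there exists a point x ∈ X that is strong chain-recurrent with respect to d: for every ε > 0 there exist n ≥ 1 and points x₀, …, xₙ with x₀ = xₙ = x and Σᵢ₌₀^{n−1} d(f(xᵢ), xᵢ₊₁) < ε. -/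
open Filter Topology Set

variable {X : Type*}

section Aux
variable {X : Type*} [MetricSpace X]

lemma scr_step (f : X → X) (x : X) :
    StrongChainRelWith (fun a b => dist a b) f x (f x) := by
  intro ε hε
  refine ⟨1, le_refl 1, fun i => if i = 0 then x else f x, by simp, by simp, ?_⟩
  simpa using hε

lemma sec_extend {f : X → X} {x y z : X} {ε δ : ℝ}
    (h : StrongEpsChainWith (fun a b => dist a b) f ε x y) (hd : dist y z < δ) :
    StrongEpsChainWith (fun a b => dist a b) f (ε + δ) x z := by
  obtain ⟨n, hn, c, h0, hny, hsum⟩ := h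
  obtain ⟨m, rfl⟩ : ∃ m, n = m + 1 := ⟨n - 1, (Nat.succ_pred_eq_of_pos hn).symm⟩
  refine ⟨m + 1, hn, fun i => if i = m + 1 then z else c i, by simp [h0], by simp, ?_⟩
  show (∑ i ∈ Finset.range (m + 1),
      dist (f (if i = m + 1 then z else c i)) (if i + 1 = m + 1 then z else c (i + 1))) < ε + δ
  rw [Finset.sum_range_succ]
  have hsum' : (∑ i ∈ Finset.range m, dist (f (c i)) (c (i + 1)))
      + dist (f (c m)) (c (m + 1)) < ε := by
    rw [← Finset.sum_range_succ]; exact hsum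
  have e1 : ∀ i ∈ Finset.range m,
      dist (f (if i = m + 1 then z else c i)) (if i + 1 = m + 1 then z else c (i + 1))
        = dist (f (c i)) (c (i + 1)) := by
    intro i hi
    rw [Finset.mem_range] at hi
    have h1 : i ≠ m + 1 := by omega
    have h2 : i + 1 ≠ m + 1 := by omega
    rw [if_neg h1, if_neg h2]
  rw [Finset.sum_congr rfl e1]
  have h1 : m ≠ m + 1 := by omega
  rw [if_neg h1, if_pos rfl]
  have : dist (f (c m)) z ≤ dist (f (c m)) (c (m + 1)) + δ := by
    calc dist (f (c m)) z ≤ dist (f (c m)) (c (m + 1)) + dist (c (m + 1)) z := dist_triangle _ _ _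
    _ ≤ dist (f (c m)) (c (m + 1)) + δ := by rw [hny]; linarith
  linarith

lemma scr_trans {f : X → X} {x y z : X}
    (h1 : StrongChainRelWith (fun a b => dist a b) f x y)
    (h2 : StrongChainRelWith (fun a b => dist a b) f y z) :
    StrongChainRelWith (fun a b => dist a b) f x z := by
  intro ε hε
  obtain ⟨n, hn, c, hc0, hcn, hcs⟩ := h1 (ε / 2) (by linarith)
  obtain ⟨m, hm, c', hc'0, hc'm, hc's⟩ := h2 (ε / 2) (by linarith)
  have hcs' : (∑ i ∈ Finset.range n, dist (f (c i)) (c (i + 1))) < ε / 2 := hcs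
  have hc's' : (∑ i ∈ Finset.range m, dist (f (c' i)) (c' (i + 1))) < ε / 2 := hc's
  refine ⟨n + m, by omega, fun i => if i < n then c i else c' (i - n), ?_, ?_, ?_⟩
  · show (if 0 < n then c 0 else c' (0 - n)) = x
    rw [if_pos (by omega : 0 < n)]; exact hc0
  · show (if n + m < n then c (n + m) else c' (n + m - n)) = z
    rw [if_neg (by omega : ¬ n + m < n)]
    simpa using hc'm
  · show (∑ i ∈ Finset.range (n + m),
        dist (f (if i < n then c i else c' (i - n)))
          (if i + 1 < n then c (i + 1) else c' (i + 1 - n))) < ε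
    rw [Finset.sum_range_add]
    have e1 : ∀ i ∈ Finset.range n,
        dist (f (if i < n then c i else c' (i - n)))
            (if i + 1 < n then c (i + 1) else c' (i + 1 - n))
          = dist (f (c i)) (c (i + 1)) := by
      intro i hi
      rw [Finset.mem_range] at hi
      rw [if_pos hi]
      by_cases h : i + 1 < n
      · rw [if_pos h]
      · have hin : i + 1 = n := by omega
        rw [if_neg h, hin, Nat.sub_self, hc'0, hcn]
    have e2 : ∀ i ∈ Finset.range m,
        dist (f (if n + i < n then c (n + i) else c' (n + i - n)))
            (if n + i + 1 < n then c (n + i + 1) else c' (n + i + 1 - n))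
          = dist (f (c' i)) (c' (i + 1)) := by
      intro i hi
      have h1 : ¬ n + i < n := by omega
      have h2 : ¬ n + i + 1 < n := by omega
      have e3 : n + i - n = i := by omega
      have e4 : n + i + 1 - n = i + 1 := by omega
      rw [if_neg h1, if_neg h2, e3, e4]
    rw [Finset.sum_congr rfl e1, Finset.sum_congr rfl e2]
    linarith

lemma omega_closed (f : X → X) (x : X) :
    IsClosed {y | StrongChainRelWith (fun a b => dist a b) f x y} := by
  rw [← closure_subset_iff_isClosed]
  intro y hy ε hε
  rw [Metric.mem_closure_iff] at hy
  obtain ⟨z, hz, hdz⟩ := hy (ε / 2) (by linarith)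
  have := sec_extend (hz (ε / 2) (by linarith)) (show dist z y < ε / 2 by rw [dist_comm]; exact hdz)
  simpa using this

end Aux
theorem stmt2 [MetricSpace X] [CompactSpace X] [Nonempty X] (f : X → X) :
    ∃ x : X, StrongChainRelWith (fun a b => dist a b) f x x := by
  classical
  set S : Set (Set X) := {A | A.Nonempty ∧ IsClosed A ∧
    ∀ a ∈ A, ∀ b, StrongChainRelWith (fun a b => dist a b) f a b → b ∈ A} with hS
  have huniv : (Set.univ : Set X) ∈ S :=
    ⟨Set.univ_nonempty, isClosed_univ, fun _ _ b _ => Set.mem_univ b⟩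
  obtain ⟨M, -, hMmem, hMmin⟩ : ∃ M, M ⊆ Set.univ ∧ Minimal (· ∈ S) M := by
    apply zorn_superset_nonempty S ?_ Set.univ huniv
    intro c hcS hchain hcne
    refine ⟨⋂₀ c, ⟨?_, ?_, ?_⟩, fun s hs => Set.sInter_subset_of_mem hs⟩
    · have : Nonempty c := hcne.to_subtype
      apply IsCompact.nonempty_sInter_of_directed_nonempty_isCompact_isClosed
      · exact IsChain.directedOn hchain.symm
      · exact fun U hU => (hcS hU).1
      · exact fun U hU => ((hcS hU).2.1).isCompact
      · exact fun U hU => (hcS hU).2.1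
    · exact isClosed_sInter fun U hU => (hcS hU).2.1
    · intro a ha b hab
      exact Set.mem_sInter.2 fun U hU => (hcS hU).2.2 a (ha U hU) b hab
  obtain ⟨a, ha⟩ := hMmem.1
  set B : Set X := {b | StrongChainRelWith (fun a b => dist a b) f a b} with hB
  have hBS : B ∈ S := by
    refine ⟨⟨f a, scr_step f a⟩, omega_closed f a, ?_⟩
    intro b hb y hy
    exact scr_trans hb hy
  have hBM : B ⊆ M := fun b hb => hMmem.2.2 a ha b hb
  have hBeq : B = M := subset_antisymm hBM (hMmin hBS hBM)
  refine ⟨a, ?_⟩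
  have : a ∈ B := hBeq ▸ ha
  exact this
end

section
/- Let X be a compact metrizable space and f : X → X an arbitrary self-map. Then there exists a point x ∈ X that lies in the generalized recurrent set GR(f), i.e., x is strong chain-recurrent with respect to every metric d compatible with the topology of X. -/
open Filter Topology Set

variable {X : Type*}

lemma strong_concat (d : X → X → ℝ) (f : X → X) {ε₁ ε₂ : ℝ} {x y z : X}
    (h1 : StrongEpsChainWith d f ε₁ x y) (h2 : StrongEpsChainWith d f ε₂ y z) :
    StrongEpsChainWith d f (ε₁ + ε₂) x z := by
  obtain ⟨n, hn, c, hc0, hcn, hsum⟩ := h1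
  obtain ⟨n', hn', c', hc0', hcn', hsum'⟩ := h2
  refine ⟨n + n', (by omega : 1 ≤ n + n'), fun i => if i ≤ n then c i else c' (i - n), ?_, ?_, ?_⟩
  · simp [Nat.zero_le, hc0]
  · have h : ¬ (n + n' ≤ n) := by omega
    simp [h, hcn']
  · rw [Finset.sum_range_add]
    have e1 : ∑ i ∈ Finset.range n,
        d (f (if i ≤ n then c i else c' (i - n)))
          (if i + 1 ≤ n then c (i + 1) else c' (i + 1 - n)) =
        ∑ i ∈ Finset.range n, d (f (c i)) (c (i + 1)) := by
      apply Finset.sum_congr rfl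
      intro i hi
      rw [Finset.mem_range] at hi
      rw [if_pos (by omega), if_pos (by omega)]
    have e2 : ∑ i ∈ Finset.range n',
        d (f (if n + i ≤ n then c (n + i) else c' (n + i - n)))
          (if n + i + 1 ≤ n then c (n + i + 1) else c' (n + i + 1 - n)) =
        ∑ i ∈ Finset.range n', d (f (c' i)) (c' (i + 1)) := by
      apply Finset.sum_congr rfl
      intro i hi
      rw [Finset.mem_range] at hi
      rcases Nat.eq_zero_or_pos i with h0 | h0
      · subst h0
        rw [if_pos (by omega : n + 0 ≤ n), if_neg (by omega : ¬ n + 0 + 1 ≤ n)]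
        have h2 : n + 0 + 1 - n = 0 + 1 := by omega
        rw [h2, (by omega : n + 0 = n), hcn, ← hc0']
      · rw [if_neg (by omega : ¬ n + i ≤ n), if_neg (by omega : ¬ n + i + 1 ≤ n)]
        have h1 : n + i - n = i := by omega
        have h2 : n + i + 1 - n = i + 1 := by omega
        rw [h1, h2]
    rw [e1, e2]
    exact add_lt_add hsum hsum'

lemma strong_endpoint (d : X → X → ℝ) (f : X → X)
    (htri : ∀ a b c : X, d a c ≤ d a b + d b c) {ε δ : ℝ} {x y z : X}
    (h : StrongEpsChainWith d f ε x y) (hd : d y z < δ) :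
    StrongEpsChainWith d f (ε + δ) x z := by
  obtain ⟨n, hn, c, hc0, hcn, hsum⟩ := h
  obtain ⟨k, rfl⟩ : ∃ k, n = k + 1 := ⟨n - 1, by omega⟩
  refine ⟨k + 1, hn, fun i => if i = k + 1 then z else c i, by simp [hc0], by simp, ?_⟩
  rw [Finset.sum_range_succ] at hsum ⊢
  have e1 : ∑ i ∈ Finset.range k,
      d (f (if i = k + 1 then z else c i)) (if i + 1 = k + 1 then z else c (i + 1)) =
      ∑ i ∈ Finset.range k, d (f (c i)) (c (i + 1)) := by
    apply Finset.sum_congr rfl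
    intro i hi
    rw [Finset.mem_range] at hi
    rw [if_neg (by omega), if_neg (by omega)]
  rw [e1]
  beta_reduce
  rw [if_neg (by omega : ¬ k = k + 1), if_pos rfl]
  have := htri (f (c k)) (c (k + 1)) z
  rw [hcn] at this
  rw [hcn] at hsum
  linarith

section GRaux
variable [t : TopologicalSpace X]

def GRrel (f : X → X) (x y : X) : Prop :=
  ∀ m : MetricSpace X, m.toUniformSpace.toTopologicalSpace = t →
    ∀ ε > 0, StrongEpsChainWith (fun a b => @dist X m.toDist a b) f ε x y

lemma GRrel.trans {f : X → X} {x y z : X} (h1 : GRrel f x y) (h2 : GRrel f y z) :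
    GRrel f x z := by
  intro m hm ε hε
  have h := strong_concat _ f (h1 m hm (ε / 2) (by linarith)) (h2 m hm (ε / 2) (by linarith))
  rwa [add_halves] at h

lemma GRrel.of_mem_closure {f : X → X} {x y : X}
    (hy : y ∈ closure {w | GRrel f x w}) : GRrel f x y := by
  intro m hm ε hε
  have hb : (@Metric.ball X m.toPseudoMetricSpace y (ε / 2)) ∈ @nhds X t y := by
    rw [← hm]
    exact @Metric.ball_mem_nhds X m.toPseudoMetricSpace y (ε / 2) (by linarith)
  obtain ⟨y', hy'b, hy'⟩ := (mem_closure_iff_nhds.mp hy _ hb)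
  have hdist : @dist X m.toDist y' y < ε / 2 := Metric.mem_ball.mp hy'b
  have h := strong_endpoint (fun a b => @dist X m.toDist a b) f
    (fun a b c => @dist_triangle X m.toPseudoMetricSpace a b c)
    (hy' m hm (ε / 2) (by linarith)) hdist
  rwa [add_halves] at h

lemma GRrel.exists_target [CompactSpace X] (f : X → X) (x : X) : ∃ y, GRrel f x y := by
  obtain ⟨y, hy⟩ := exists_clusterPt_of_compactSpace (map (fun n => f^[n + 1] x) atTop)
  refine ⟨y, ?_⟩
  intro m hm ε hε
  have hb : (@Metric.ball X m.toPseudoMetricSpace y ε) ∈ @nhds X t y := by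
    rw [← hm]
    exact @Metric.ball_mem_nhds X m.toPseudoMetricSpace y ε hε
  obtain ⟨p, hpb, hpi⟩ := clusterPt_iff_nonempty.mp hy hb (image_mem_map (univ_mem (f := atTop)))
  obtain ⟨n, -, rfl⟩ := hpi
  refine ⟨n + 1, by omega, fun i => if i = n + 1 then y else f^[i] x, by simp, by simp, ?_⟩
  rw [Finset.sum_range_succ]
  have e1 : ∑ i ∈ Finset.range n,
      (fun a b => @dist X m.toDist a b) (f (if i = n + 1 then y else f^[i] x))
        (if i + 1 = n + 1 then y else f^[i + 1] x) = 0 := by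
    apply Finset.sum_eq_zero
    intro i hi
    rw [Finset.mem_range] at hi
    rw [if_neg (by omega), if_neg (by omega), Function.iterate_succ_apply' f i x]
    exact @dist_self X m.toPseudoMetricSpace _
  rw [e1, zero_add]
  beta_reduce
  rw [if_neg (by omega : ¬ n = n + 1), if_pos rfl]
  have : f (f^[n] x) = f^[n + 1] x := (Function.iterate_succ_apply' f n x).symm
  rw [this]
  exact Metric.mem_ball.mp hpb

theorem stmt3' [CompactSpace X] [Nonempty X] (f : X → X) :
    ∃ x : X, ∀ m : MetricSpace X, m.toUniformSpace.toTopologicalSpace = t →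
      ∀ ε > 0, StrongEpsChainWith (fun a b => @dist X m.toDist a b) f ε x x := by
  classical
  set F : X → Set X := fun x => {y | GRrel f x y} with hF
  have hFne : ∀ x, (F x).Nonempty := fun x => GRrel.exists_target f x
  have hFclosed : ∀ x, IsClosed (F x) := fun x =>
    isClosed_of_closure_subset (fun y hy => GRrel.of_mem_closure hy)
  have hFsub : ∀ x y, y ∈ F x → F y ⊆ F x := fun x y hxy z hz => GRrel.trans hxy hz
  have hzorn : ∀ c ⊆ Set.range F, IsChain (· ⊆ ·) c → c.Nonempty →
      ∃ lb ∈ Set.range F, ∀ s ∈ c, lb ⊆ s := by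
    intro c hcS hchain hcne
    have hdir : DirectedOn (· ⊇ ·) c := by
      intro a ha b hb
      rcases hchain.total ha hb with h | h
      · exact ⟨a, ha, subset_rfl, h⟩
      · exact ⟨b, hb, h, subset_rfl⟩
    have hne : (⋂₀ c).Nonempty := by
      haveI := hcne.to_subtype
      refine IsCompact.nonempty_sInter_of_directed_nonempty_isCompact_isClosed hdir ?_ ?_ ?_
      · rintro U hU; obtain ⟨x, rfl⟩ := hcS hU; exact hFne x
      · rintro U hU; obtain ⟨x, rfl⟩ := hcS hU; exact (hFclosed x).isCompact
      · rintro U hU; obtain ⟨x, rfl⟩ := hcS hU; exact hFclosed x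
    obtain ⟨z, hz⟩ := hne
    refine ⟨F z, ⟨z, rfl⟩, ?_⟩
    intro U hU
    obtain ⟨x, rfl⟩ := hcS hU
    exact hFsub _ _ (Set.mem_sInter.mp hz _ hU)
  obtain ⟨M, hsub, hMin⟩ := zorn_superset_nonempty (Set.range F) hzorn
      (F (Classical.arbitrary X)) ⟨_, rfl⟩
  obtain ⟨x0, rfl⟩ := hMin.prop
  obtain ⟨y, hy⟩ := hFne x0
  have h1 : F y ⊆ F x0 := hFsub _ _ hy
  have h2 : F x0 ⊆ F y := hMin.2 ⟨y, rfl⟩ h1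
  exact ⟨y, h2 hy⟩

end GRaux

theorem stmt3 [t : TopologicalSpace X] [CompactSpace X] [TopologicalSpace.MetrizableSpace X]
    [Nonempty X] (f : X → X) :
    ∃ x : X, ∀ m : MetricSpace X, m.toUniformSpace.toTopologicalSpace = t →
      StrongChainRelWith (fun a b => @dist X m.toDist a b) f x x := by
  obtain ⟨x, hx⟩ := stmt3' f
  exact ⟨x, fun m hm => hx m hm⟩
end

section
/- Let (X,d) be a compact metric space and f : X → X an arbitrary self-map. Then X contains a nonempty closed f-invariant subset S that is internally chain transitive: for all x, y ∈ S and all ε > 0 there is an ε-chain from x to y all of whose points lie in S. -/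
open Filter Topology Set

variable {X : Type*}

theorem stmt5 [MetricSpace X] [CompactSpace X] [Nonempty X] (f : X → X) :
    ∃ S : Set X, S.Nonempty ∧ IsClosed S ∧ Set.MapsTo f S S ∧
      InternallyChainTransitive f S := by
  classical
  -- the collection of nonempty closed invariant sets
  set 𝒮 : Set (Set X) := {S | S.Nonempty ∧ IsClosed S ∧ Set.MapsTo f S S} with h𝒮
  have hzorn : ∀ c ⊆ 𝒮, IsChain (· ⊆ ·) c → c.Nonempty → ∃ lb ∈ 𝒮, ∀ s ∈ c, lb ⊆ s := by
    intro c hc hchain hcne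
    refine ⟨⋂₀ c, ⟨?_, ?_, ?_⟩, fun s hs => sInter_subset_of_mem hs⟩
    · haveI : Nonempty c := hcne.to_subtype
      exact IsCompact.nonempty_sInter_of_directed_nonempty_isCompact_isClosed
        (IsChain.directedOn hchain.symm) (fun U hU => (hc hU).1)
        (fun U hU => (hc hU).2.1.isCompact) (fun U hU => (hc hU).2.1)
    · exact isClosed_sInter fun U hU => (hc hU).2.1
    · intro x hx
      exact fun U hU => (hc hU).2.2 (hx U hU)
  obtain ⟨M, -, hM⟩ := zorn_superset_nonempty 𝒮 hzorn Set.univ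
    ⟨univ_nonempty, isClosed_univ, Set.mapsTo_univ f _⟩
  obtain ⟨⟨hMne, hMcl, hMinv⟩, hMmin⟩ := hM
  refine ⟨M, hMne, hMcl, hMinv, ?_⟩
  intro x hx y hy ε hε
  -- the set of points reachable from x by chains in M
  set T : Set X := {y | y ∈ M ∧ ∀ ε > 0, EpsChainIn f M ε x y} with hT
  have hTM : T ⊆ M := fun z hz => hz.1
  have hfx : f x ∈ T := by
    refine ⟨hMinv hx, fun δ hδ => ?_⟩
    refine ⟨1, fun i => if i = 0 then x else f x, ⟨le_refl 1, by simp, by simp, ?_⟩, ?_⟩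
    · intro i hi
      interval_cases i
      simpa using hδ
    · intro i hi
      interval_cases i
      · simpa using hx
      · simpa using hMinv hx
  have hTinv : Set.MapsTo f T T := by
    rintro z ⟨hzM, hz⟩
    refine ⟨hMinv hzM, fun δ hδ => ?_⟩
    obtain ⟨n, c, ⟨hn1, hc0, hcn, hcd⟩, hcM⟩ := hz δ hδ
    refine ⟨n + 1, fun i => if i ≤ n then c i else f z,
      ⟨le_trans hn1 (Nat.le_succ n), by simp only [if_pos (Nat.zero_le n)]; exact hc0, ?_, ?_⟩, ?_⟩
    · simp
    · intro i hi
      rcases Nat.lt_succ_iff_lt_or_eq.mp hi with h | h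
      · have h1 : i ≤ n := h.le
        have h2 : i + 1 ≤ n := h
        simpa [h1, h2] using hcd i h
      · subst h
        simp [hcn, hδ]
    · intro i hi
      by_cases h : i ≤ n
      · simpa [h] using hcM i h
      · simpa [h] using hMinv hzM
  have hTclosedpt : ∀ z ∈ closure T, z ∈ M → z ∈ T := by
    intro z hzc hzM
    refine ⟨hzM, fun δ hδ => ?_⟩
    obtain ⟨w, hwT, hwd⟩ := Metric.mem_closure_iff.mp hzc (δ / 2) (by linarith)
    obtain ⟨n, c, ⟨hn1, hc0, hcn, hcd⟩, hcM⟩ := hwT.2 (δ / 2) (by linarith)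
    refine ⟨n, fun i => if i = n then z else c i, ⟨hn1, ?_, by simp, ?_⟩, ?_⟩
    · have : (0 : ℕ) ≠ n := by omega
      simp [this, hc0]
    · intro i hi
      by_cases h : i + 1 = n
      · have hin : i ≠ n := by omega
        simp only [hin, if_false, h, if_true]
        have h2 := hcd i hi
        rw [h, hcn] at h2
        have h3 : dist w z < δ / 2 := by rw [dist_comm]; exact hwd
        calc dist (f (c i)) z ≤ dist (f (c i)) w + dist w z := dist_triangle _ _ _
          _ < δ / 2 + δ / 2 := add_lt_add h2 h3
          _ = δ := by ring
      · have hin : i ≠ n := by omega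
        simp only [hin, if_false, h, if_false]
        exact lt_trans (hcd i hi) (by linarith)
    · intro i hi
      by_cases h : i = n
      · simpa [h] using hzM
      · simpa [h] using hcM i hi
  have hTclosed : IsClosed T := by
    have : T = closure T ∩ M := by
      apply Subset.antisymm
      · exact subset_inter subset_closure hTM
      · rintro z ⟨h1, h2⟩; exact hTclosedpt z h1 h2
    rw [this]
    exact (isClosed_closure).inter hMcl
  have hTmem : T ∈ 𝒮 := ⟨⟨f x, hfx⟩, hTclosed, hTinv⟩
  have : T = M := le_antisymm hTM (hMmin hTmem hTM)
  have hyT : y ∈ T := this ▸ hy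
  exact hyT.2 ε hε
end

section
/- Let (X,d) be a compact metric space and f : X → X an arbitrary self-map. Then for every x ∈ X there exists a nonempty closed f-invariant internally chain transitive set S ⊆ X such that x is in chain relation with every point of S. -/
open Filter Topology Set

variable {X : Type*}

section AuxProofs
variable {X : Type*} [PseudoMetricSpace X]

/-- The set of points chain-reachable from `z` within `S`. -/
def chainSetIn (f : X → X) (S : Set X) (z : X) : Set X := {w | ChainRelIn f S z w}

lemma chainSetIn_subset (f : X → X) (S : Set X) (z : X) : chainSetIn f S z ⊆ S := by
  intro w hw
  obtain ⟨n, c, hc, hmem⟩ := hw 1 one_pos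
  have h := hmem n le_rfl
  rwa [hc.2.2.1] at h

lemma mem_chainSetIn_of_apply {f : X → X} {S : Set X} {z : X}
    (hz : z ∈ S) (hmaps : Set.MapsTo f S S) : f z ∈ chainSetIn f S z := by
  intro ε hε
  refine ⟨1, fun i => if i = 0 then z else f z, ⟨le_rfl, by simp, by simp, ?_⟩, ?_⟩
  · intro i hi
    interval_cases i
    simpa using hε
  · intro i hi
    interval_cases i
    · simpa using hz
    · simpa using hmaps hz

lemma chainSetIn_mapsTo {f : X → X} {S : Set X} {z : X} (hmaps : Set.MapsTo f S S) :
    Set.MapsTo f (chainSetIn f S z) (chainSetIn f S z) := by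
  intro w hw ε hε
  obtain ⟨n, c, ⟨hn, hc0, hcn, hstep⟩, hmem⟩ := hw ε hε
  refine ⟨n + 1, fun i => if i = n + 1 then f w else c i, ⟨le_trans hn (by omega),
    by simp [hc0], by simp, ?_⟩, ?_⟩
  · intro i hi
    rcases Nat.lt_or_ge i n with h | h
    · have h1 : i ≠ n + 1 := by omega
      have h2 : i + 1 ≠ n + 1 := by omega
      simpa [h1, h2, Nat.ne_of_lt h] using hstep i h
    · have hin : i = n := by omega
      subst hin
      have h1 : i ≠ i + 1 := by omega
      simp only [if_neg h1, if_pos rfl, hcn]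
      simpa using hε
  · intro i hi
    rcases Nat.lt_or_ge i (n + 1) with h | h
    · have h1 : i ≠ n + 1 := by omega
      simpa [h1] using hmem i (by omega)
    · have hin : i = n + 1 := by omega
      subst hin
      have hwS : w ∈ S := by rw [← hcn]; exact hmem n le_rfl
      simpa using hmaps hwS

lemma chainSetIn_isClosed {f : X → X} {S : Set X} {z : X} (hS : IsClosed S) :
    IsClosed (chainSetIn f S z) := by
  refine isClosed_of_closure_subset ?_
  intro w hw
  have hwS : w ∈ S := by
    have h := closure_mono (chainSetIn_subset f S z) hw
    rwa [hS.closure_eq] at h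
  intro ε hε
  obtain ⟨w', hw', hdist⟩ := Metric.mem_closure_iff.mp hw (ε / 2) (by linarith)
  obtain ⟨n, c, ⟨hn, hc0, hcn, hstep⟩, hmem⟩ := hw' (ε / 2) (by linarith)
  refine ⟨n, fun i => if i = n then w else c i, ⟨hn, ?_, by simp, ?_⟩, ?_⟩
  · have h0 : (0 : ℕ) ≠ n := by omega
    simpa [h0] using hc0
  · intro i hi
    have h1 : i ≠ n := by omega
    rcases Nat.lt_or_ge (i + 1) n with h | h
    · have h2 : i + 1 ≠ n := by omega
      have h3 := hstep i hi
      simp only [if_neg h1, if_neg h2]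
      linarith
    · have h2 : i + 1 = n := by omega
      have h3 := hstep i hi
      simp only [if_neg h1, if_pos h2]
      calc dist (f (c i)) w ≤ dist (f (c i)) (c (i + 1)) + dist (c (i + 1)) w :=
            dist_triangle _ _ _
        _ < ε / 2 + ε / 2 := by
            refine add_lt_add h3 ?_
            rw [h2, hcn, dist_comm]
            exact hdist
        _ = ε := by ring
  · intro i hi
    rcases eq_or_ne i n with h | h
    · simpa [h] using hwS
    · simpa [h] using hmem i hi

end AuxProofs

theorem stmt6 [MetricSpace X] [CompactSpace X] (f : X → X) (x : X) :
    ∃ S : Set X, S.Nonempty ∧ IsClosed S ∧ Set.MapsTo f S S ∧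
      InternallyChainTransitive f S ∧ ∀ y ∈ S, ChainRel f x y := by
  classical
  set S₀ := chainSetIn f Set.univ x with hS₀def
  have hS₀ne : S₀.Nonempty := ⟨f x, mem_chainSetIn_of_apply (Set.mem_univ x) (Set.mapsTo_univ f _)⟩
  have hS₀closed : IsClosed S₀ := chainSetIn_isClosed isClosed_univ
  have hS₀maps : Set.MapsTo f S₀ S₀ := chainSetIn_mapsTo (Set.mapsTo_univ f _)
  set A : Set (Set X) := {T | T ⊆ S₀ ∧ T.Nonempty ∧ IsClosed T ∧ Set.MapsTo f T T} with hAdef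
  have hS₀mem : S₀ ∈ A := ⟨subset_rfl, hS₀ne, hS₀closed, hS₀maps⟩
  have hzorn : ∀ c ⊆ A, IsChain (· ⊆ ·) c → c.Nonempty → ∃ lb ∈ A, ∀ s ∈ c, lb ⊆ s := by
    intro c hcA hchain hcne
    haveI : Nonempty c := hcne.to_subtype
    have hdir : Directed (· ⊇ ·) (fun T : c => (T : Set X)) := by
      intro T U
      rcases eq_or_ne (T : Set X) (U : Set X) with h | h
      · exact ⟨T, subset_rfl, h.le⟩
      rcases hchain T.2 U.2 h with h' | h'
      · exact ⟨T, subset_rfl, h'⟩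
      · exact ⟨U, h', subset_rfl⟩
    have hne : (⋂ T : c, (T : Set X)).Nonempty := by
      apply IsCompact.nonempty_iInter_of_directed_nonempty_isCompact_isClosed _ hdir
      · exact fun T => (hcA T.2).2.1
      · exact fun T => (hcA T.2).2.2.1.isCompact
      · exact fun T => (hcA T.2).2.2.1
    obtain ⟨T₀, hT₀⟩ := hcne
    refine ⟨⋂ T : c, (T : Set X), ⟨?_, hne, ?_, ?_⟩, ?_⟩
    · exact (Set.iInter_subset _ ⟨T₀, hT₀⟩).trans (hcA hT₀).1
    · exact isClosed_iInter fun T => (hcA T.2).2.2.1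
    · intro y hy
      simp only [Set.mem_iInter] at hy ⊢
      exact fun T => (hcA T.2).2.2.2 (hy T)
    · exact fun s hs => Set.iInter_subset (fun T : c => (T : Set X)) ⟨s, hs⟩
  obtain ⟨S, hSsub, hSmin⟩ := zorn_superset_nonempty A hzorn S₀ hS₀mem
  obtain ⟨hS1, hS2, hS3, hS4⟩ := hSmin.prop
  refine ⟨S, hS2, hS3, hS4, ?_, ?_⟩
  · intro z hz w hw ε hε
    have hmemA : chainSetIn f S z ∈ A :=
      ⟨(chainSetIn_subset f S z).trans hS1, ⟨f z, mem_chainSetIn_of_apply hz hS4⟩,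
        chainSetIn_isClosed hS3, chainSetIn_mapsTo hS4⟩
    exact hSmin.2 hmemA (chainSetIn_subset f S z) hw ε hε
  · intro y hy ε hε
    obtain ⟨n, c, hc, -⟩ := hS1 hy ε hε
    exact ⟨n, c, hc⟩
end

section
/- There exists a map f : [0,1] → [0,1] (necessarily discontinuous) of a compact metric space such that no point x ∈ [0,1] satisfies x Ñ x. Concretely, define f(0) = 3/4, f(x) = x(x + 1/2) for x ∈ (0, 1/2), f(1/2) = 1/4, and f(x) = x/2 + 1/4 for x ∈ (1/2, 1]; then no x ∈ [0,1] satisfies x Ñ x. -/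
open Filter Topology Set

variable {X : Type*}

open Set

noncomputable def fmap (x : ℝ) : ℝ :=
  if x = 0 then 3/4 else if x < 1/2 then x*(x+1/2) else if x = 1/2 then 1/4 else x/2 + 1/4

lemma fmap_zero : fmap 0 = 3/4 := by simp [fmap]

lemma fmap_low {x : ℝ} (hx : x ∈ Ioo (0:ℝ) (1/2)) : fmap x = x*(x+1/2) := by
  obtain ⟨h0, h1⟩ := hx
  rw [fmap, if_neg (by linarith), if_pos h1]

lemma fmap_half : fmap (1/2) = 1/4 := by norm_num [fmap]

lemma fmap_high {x : ℝ} (hx : x ∈ Ioc (1/2:ℝ) 1) : fmap x = x/2 + 1/4 := by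
  obtain ⟨h0, h1⟩ := hx
  rw [fmap, if_neg (by linarith), if_neg (by linarith), if_neg (by linarith)]

lemma step_low {w : ℝ} (hw : w ∈ Ioo (0:ℝ) (1/2)) :
    fmap w ∈ Ioo (0:ℝ) (1/2) ∧ fmap w ≤ w := by
  obtain ⟨h0, h1⟩ := hw
  rw [fmap_low ⟨h0, h1⟩]
  refine ⟨⟨by nlinarith, by nlinarith⟩, by nlinarith⟩

lemma step_high {w : ℝ} (hw : w ∈ Ioc (1/2:ℝ) 1) :
    fmap w ∈ Ioc (1/2:ℝ) 1 ∧ fmap w ≤ w := by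
  obtain ⟨h0, h1⟩ := hw
  rw [fmap_high ⟨h0, h1⟩]
  refine ⟨⟨by linarith, by linarith⟩, by linarith⟩

lemma iter_low {z : ℝ} (hz : z ∈ Ioo (0:ℝ) (1/2)) (k : ℕ) :
    fmap^[k] z ∈ Ioo (0:ℝ) (1/2) ∧ fmap^[k] z ≤ z := by
  induction k with
  | zero => simp only [Function.iterate_zero_apply]; exact ⟨hz, le_rfl⟩
  | succ n ih =>
    rw [Function.iterate_succ_apply']
    exact ⟨(step_low ih.1).1, le_trans (step_low ih.1).2 ih.2⟩

lemma iter_high {z : ℝ} (hz : z ∈ Ioc (1/2:ℝ) 1) (k : ℕ) :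
    fmap^[k] z ∈ Ioc (1/2:ℝ) 1 ∧ fmap^[k] z ≤ z := by
  induction k with
  | zero => simp only [Function.iterate_zero_apply]; exact ⟨hz, le_rfl⟩
  | succ n ih =>
    rw [Function.iterate_succ_apply']
    exact ⟨(step_high ih.1).1, le_trans (step_high ih.1).2 ih.2⟩


theorem stmt9 : ∃ f : ℝ → ℝ,
    Set.MapsTo f (Set.Icc 0 1) (Set.Icc 0 1) ∧
    f 0 = 3 / 4 ∧
    (∀ x ∈ Set.Ioo (0 : ℝ) (1 / 2), f x = x * (x + 1 / 2)) ∧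
    f (1 / 2) = 1 / 4 ∧
    (∀ x ∈ Set.Ioc (1 / 2 : ℝ) 1, f x = x / 2 + 1 / 4) ∧
    ∀ x ∈ Set.Icc (0 : ℝ) 1,
      ¬ (∀ ε > 0, ∃ k : ℕ, ∃ z ∈ Set.Icc (0 : ℝ) 1,
        dist z (f x) < ε ∧ dist (f^[k] z) x < ε) := by
  refine ⟨fmap, ?_, fmap_zero, fun x hx => fmap_low hx, fmap_half,
    fun x hx => fmap_high hx, ?_⟩
  · intro x hx
    rcases eq_or_lt_of_le hx.1 with h0 | h0
    · rw [← h0, fmap_zero]; constructor <;> norm_num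
    rcases lt_trichotomy x (1/2) with h1 | h1 | h1
    · have := step_low ⟨h0, h1⟩
      exact ⟨this.1.1.le, by linarith [this.1.2]⟩
    · rw [h1, fmap_half]; constructor <;> norm_num
    · have := step_high ⟨h1, hx.2⟩
      exact ⟨by linarith [this.1.1], this.1.2⟩
  · intro x hx h
    rcases eq_or_lt_of_le hx.1 with h0 | h0
    · -- x = 0
      obtain ⟨k, z, hz01, hd1, hd2⟩ := h (1/4) (by norm_num)
      rw [← h0] at hd1 hd2
      rw [fmap_zero, Real.dist_eq, abs_sub_lt_iff] at hd1
      have hz : z ∈ Ioc (1/2:ℝ) 1 := ⟨by linarith [hd1.1, hd1.2], hz01.2⟩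
      have := (iter_high hz k).1.1
      rw [Real.dist_eq, abs_sub_lt_iff] at hd2
      linarith [hd2.1]
    rcases lt_trichotomy x (1/2) with h1 | h1 | h1
    · -- x ∈ (0,1/2)
      have hfx := fmap_low ⟨h0, h1⟩
      set ε := min (x*(x+1/2)) (x - x*(x+1/2)) / 2 with hε
      have hε1 : 0 < x*(x+1/2) := by nlinarith
      have hε2 : 0 < x - x*(x+1/2) := by nlinarith
      have hεpos : 0 < ε := by
        rw [hε]; have := lt_min hε1 hε2; linarith
      obtain ⟨k, z, hz01, hd1, hd2⟩ := h ε hεpos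
      rw [hfx, Real.dist_eq, abs_sub_lt_iff] at hd1
      have hεa : ε ≤ (x*(x+1/2))/2 := by
        rw [hε]; have := min_le_left (x*(x+1/2)) (x - x*(x+1/2)); linarith
      have hεb : ε ≤ (x - x*(x+1/2))/2 := by
        rw [hε]; have := min_le_right (x*(x+1/2)) (x - x*(x+1/2)); linarith
      have hz : z ∈ Ioo (0:ℝ) (1/2) := ⟨by linarith [hd1.2], by linarith [hd1.1]⟩
      have hiter := iter_low hz k
      rw [Real.dist_eq, abs_sub_lt_iff] at hd2
      linarith [hd2.2, hiter.2, hd1.1]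
    · -- x = 1/2
      obtain ⟨k, z, hz01, hd1, hd2⟩ := h (1/8) (by norm_num)
      rw [h1] at hd1 hd2
      rw [fmap_half, Real.dist_eq, abs_sub_lt_iff] at hd1
      have hz : z ∈ Ioo (0:ℝ) (1/2) := ⟨by linarith [hd1.1], by linarith [hd1.2]⟩
      have hiter := iter_low hz k
      rw [Real.dist_eq, abs_sub_lt_iff] at hd2
      linarith [hd2.2, hiter.2, hd1.1]
    · -- x ∈ (1/2, 1]
      have hfx := fmap_high ⟨h1, hx.2⟩
      have hεpos : 0 < (x - 1/2)/4 := by linarith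
      obtain ⟨k, z, hz01, hd1, hd2⟩ := h ((x - 1/2)/4) hεpos
      rw [hfx, Real.dist_eq, abs_sub_lt_iff] at hd1
      have hz : z ∈ Ioc (1/2:ℝ) 1 := ⟨by linarith [hd1.1], hz01.2⟩
      have hiter := iter_high hz k
      rw [Real.dist_eq, abs_sub_lt_iff] at hd2
      linarith [hd2.2, hiter.2, hd1.1]
end

section
/- Let (X,d) be a compact metric space and f : X → X an arbitrary self-map. If M ⊆ X is internally chain transitive, then M is 𝒞⊆-transitive: for all x, y ∈ M, there exist a non-increasing sequence of positive reals (εₙ) converging to 0 and a family (Cₙ) where each Cₙ is (the set of points of) an εₙ-chain from x to y, with Cₙ ⊆ Cₙ₊₁ for all n. -/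
open Filter Topology Set

variable {X : Type*}

lemma chain_append' [PseudoMetricSpace X] {f : X → X} {S : Set X} {ε : ℝ}
    {n m : ℕ} {c d : ℕ → X} {x y z : X}
    (hc : IsEpsChain f ε n c x y) (hcS : ∀ i ≤ n, c i ∈ S)
    (hd : IsEpsChain f ε m d y z) (hdS : ∀ i ≤ m, d i ∈ S) :
    ∃ e, IsEpsChain f ε (n + m) e x z ∧ (∀ i ≤ n + m, e i ∈ S) ∧
      c '' Set.Iic n ⊆ e '' Set.Iic (n + m) ∧ d '' Set.Iic m ⊆ e '' Set.Iic (n + m) := by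
  obtain ⟨hn, hc0, hcn, hcstep⟩ := hc
  obtain ⟨hm, hd0, hdm, hdstep⟩ := hd
  set e : ℕ → X := fun i => if i ≤ n then c i else d (i - n) with he
  have key : ∀ i, n ≤ i → e i = d (i - n) := by
    intro i hi
    rcases eq_or_lt_of_le hi with h | h
    · simp [he, ← h, hcn, ← hd0]
    · simp [he, Nat.not_le.mpr h]
  refine ⟨e, ⟨le_add_right hn, ?_, ?_, ?_⟩, ?_, ?_, ?_⟩
  · simp [he, hc0]
  · rw [key _ (Nat.le_add_right n m)]; simpa using hdm
  · intro i hi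
    by_cases h : i + 1 ≤ n
    · have : i ≤ n := le_of_lt h
      simp only [he, if_pos h, if_pos this]
      exact hcstep i (lt_of_lt_of_le (Nat.lt_succ_self i) h)
    · have hni : n ≤ i := by omega
      rw [key _ hni, key _ (le_trans hni (Nat.le_succ i))]
      have : i + 1 - n = (i - n) + 1 := by omega
      rw [this]
      exact hdstep (i - n) (by omega)
  · intro i hi
    by_cases h : i ≤ n
    · simp only [he, if_pos h]; exact hcS i h
    · rw [key _ (by omega)]; exact hdS (i - n) (by omega)
  · rintro _ ⟨j, hj, rfl⟩
    exact ⟨j, by simpa using le_trans (Set.mem_Iic.mp hj) (Nat.le_add_right n m),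
      by simp [he, Set.mem_Iic.mp hj]⟩
  · rintro _ ⟨j, hj, rfl⟩
    refine ⟨n + j, by simpa using Set.mem_Iic.mp hj, ?_⟩
    rw [key _ (Nat.le_add_right n j)]
    simp
lemma chain_refine [PseudoMetricSpace X] {f : X → X} {M : Set X}
    (hM : InternallyChainTransitive f M)
    {ε ε' : ℝ} (hε' : 0 < ε') {n : ℕ} {c : ℕ → X} {x y : X}
    (hc : IsEpsChain f ε n c x y) (hcS : ∀ i ≤ n, c i ∈ M) :
    ∃ n' c', IsEpsChain f ε' n' c' x y ∧ (∀ i ≤ n', c' i ∈ M) ∧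
      c '' Set.Iic n ⊆ c' '' Set.Iic n' := by
  obtain ⟨hn, hc0, hcn, _⟩ := hc
  have claim : ∀ k, 1 ≤ k → k ≤ n → ∃ n' c', IsEpsChain f ε' n' c' x (c k) ∧
      (∀ i ≤ n', c' i ∈ M) ∧ c '' Set.Iic k ⊆ c' '' Set.Iic n' := by
    intro k hk
    induction k, hk using Nat.le_induction with
    | base =>
      intro h1n
      obtain ⟨n', c', hchain, hS⟩ := hM x (hc0 ▸ hcS 0 (by omega)) (c 1) (hcS 1 h1n) ε' hε'
      refine ⟨n', c', hchain, hS, ?_⟩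
      rintro _ ⟨j, hj, rfl⟩
      have hj' : j ≤ 1 := hj
      interval_cases j
      · exact ⟨0, by simp, by rw [hchain.2.1, hc0]⟩
      · exact ⟨n', by simp, hchain.2.2.1⟩
    | succ k hk ih =>
      intro hkn
      obtain ⟨n', c', hchain, hS, hsub⟩ := ih (by omega)
      obtain ⟨m, d, hdchain, hdS⟩ :=
        hM (c k) (hcS k (by omega)) (c (k+1)) (hcS (k+1) hkn) ε' hε'
      obtain ⟨e, he, heS, hsub1, hsub2⟩ := chain_append' hchain hS hdchain hdS
      refine ⟨n' + m, e, he, heS, ?_⟩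
      rintro _ ⟨j, hj, rfl⟩
      have hj' : j ≤ k + 1 := hj
      rcases Nat.lt_or_ge j (k+1) with h | h
      · exact hsub1 (hsub ⟨j, Set.mem_Iic.mpr (by omega), rfl⟩)
      · have : j = k + 1 := by omega
        subst this
        exact hsub2 ⟨m, by simp, hdchain.2.2.1⟩
  obtain ⟨n', c', hchain, hS, hsub⟩ := claim n hn (le_refl n)
  exact ⟨n', c', hcn ▸ hchain, hS, hsub⟩

theorem stmt11 [MetricSpace X] [CompactSpace X] (f : X → X) (M : Set X)
    (hM : InternallyChainTransitive f M) :
    ∀ x ∈ M, ∀ y ∈ M, NestedChainRel f x y := by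
  intro x hx y hy
  set ε : ℕ → ℝ := fun n => (1/2 : ℝ) ^ n with hε
  have hεpos : ∀ n, 0 < ε n := fun n => pow_pos (by norm_num) n
  let T := fun n => {p : ℕ × (ℕ → X) //
    IsEpsChain f (ε n) p.1 p.2 x y ∧ ∀ i ≤ p.1, p.2 i ∈ M}
  obtain ⟨n0, c0, hc0, hS0⟩ := hM x hx y hy (ε 0) (hεpos 0)
  let t0 : T 0 := ⟨(n0, c0), hc0, hS0⟩
  have step : ∀ n (t : T n), ∃ t' : T (n+1),
      t.1.2 '' Set.Iic t.1.1 ⊆ t'.1.2 '' Set.Iic t'.1.1 := by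
    intro n t
    obtain ⟨n', c', hchain, hS, hsub⟩ := chain_refine hM (hεpos (n+1)) t.2.1 t.2.2
    exact ⟨⟨(n', c'), hchain, hS⟩, hsub⟩
  let seq : ∀ n, T n := fun n => Nat.rec t0 (fun n t => (step n t).choose) n
  refine ⟨ε, hεpos, ?_, ?_, fun n => (seq n).1.1, fun n => (seq n).1.2,
    fun n => (seq n).2.1, fun n => (step n (seq n)).choose_spec⟩
  · exact fun a b hab => pow_le_pow_of_le_one (by norm_num) (by norm_num) hab
  · exact tendsto_pow_atTop_nhds_zero_of_lt_one (by norm_num) (by norm_num)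
end

section
/- Let (X,d) be a compact metric space and f : X → X an arbitrary self-map. Then there exists a point x ∈ X with x 𝒞⊆ x; that is, there are a non-increasing sequence of positive reals εₙ → 0 and εₙ-chains Cₙ from x to x whose point sets satisfy Cₙ ⊆ Cₙ₊₁ for all n. -/
open Filter Topology Set

variable {X : Type*}

section Aux
variable [MetricSpace X] {f : X → X} {S : Set X}

lemma concat_chain {ε : ℝ} {x y z : X} {n₁ n₂ : ℕ} {c₁ c₂ : ℕ → X}
    (h1 : IsEpsChain f ε n₁ c₁ x y) (hS1 : ∀ i ≤ n₁, c₁ i ∈ S)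
    (h2 : IsEpsChain f ε n₂ c₂ y z) (hS2 : ∀ i ≤ n₂, c₂ i ∈ S) :
    ∃ m e, IsEpsChain f ε m e x z ∧ (∀ i ≤ m, e i ∈ S) ∧
      c₁ '' Set.Iic n₁ ⊆ e '' Set.Iic m ∧ c₂ '' Set.Iic n₂ ⊆ e '' Set.Iic m := by
  obtain ⟨hn₁, h10, h1n, h1s⟩ := h1
  obtain ⟨hn₂, h20, h2n, h2s⟩ := h2
  refine ⟨n₁ + n₂, fun i => if i ≤ n₁ then c₁ i else c₂ (i - n₁), ⟨by omega, ?_, ?_, ?_⟩, ?_, ?_, ?_⟩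
  · simp [h10]
  · have : ¬ (n₁ + n₂ ≤ n₁) := by omega
    simp only [this, if_false]
    have : n₁ + n₂ - n₁ = n₂ := by omega
    rw [this, h2n]
  · intro i hi
    by_cases h : i + 1 ≤ n₁
    · have hi1 : i ≤ n₁ := by omega
      simp only [h, hi1, if_true]
      exact h1s i (by omega)
    · by_cases h' : i ≤ n₁
      · have hieq : i = n₁ := by omega
        simp only [h, h', if_true, if_false]
        subst hieq
        rw [h1n, ← h20]
        have : i + 1 - i = 1 := by omega
        rw [this]
        exact h2s 0 (by omega)
      · simp only [h, h', if_false]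
        have : i + 1 - n₁ = (i - n₁) + 1 := by omega
        rw [this]
        exact h2s (i - n₁) (by omega)
  · intro i hi
    by_cases h : i ≤ n₁
    · simp only [h, if_true]; exact hS1 i h
    · simp only [h, if_false]; exact hS2 (i - n₁) (by omega)
  · rintro _ ⟨i, hi, rfl⟩
    simp only [Set.mem_Iic] at hi
    exact ⟨i, by simp only [Set.mem_Iic]; omega, by simp [hi]⟩
  · rintro _ ⟨j, hj, rfl⟩
    simp only [Set.mem_Iic] at hj
    by_cases h0 : j = 0
    · subst h0
      exact ⟨n₁, by simp only [Set.mem_Iic]; omega, by simp [h1n, h20]⟩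
    · refine ⟨n₁ + j, by simp only [Set.mem_Iic]; omega, ?_⟩
      have : ¬ (n₁ + j ≤ n₁) := by omega
      simp only [this, if_false]
      congr 1
      omega

lemma chain_through (hICT : InternallyChainTransitive f S) {ε : ℝ} (hε : 0 < ε)
    (p : ℕ → X) : ∀ k, (∀ i ≤ k, p i ∈ S) →
    ∃ m e, IsEpsChain f ε m e (p 0) (p k) ∧ (∀ i ≤ m, e i ∈ S) ∧
      ∀ i ≤ k, p i ∈ e '' Set.Iic m := by
  intro k
  induction k with
  | zero =>
    intro hp
    obtain ⟨m, e, he, heS⟩ := hICT (p 0) (hp 0 le_rfl) (p 0) (hp 0 le_rfl) ε hε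
    refine ⟨m, e, he, heS, ?_⟩
    intro i hi
    have : i = 0 := by omega
    subst this
    exact ⟨0, by simp, he.2.1⟩
  | succ k ih =>
    intro hp
    obtain ⟨m, e, he, heS, hcov⟩ := ih (fun i hi => hp i (by omega))
    obtain ⟨m', e', he', heS'⟩ :=
      hICT (p k) (hp k (by omega)) (p (k + 1)) (hp (k + 1) le_rfl) ε hε
    obtain ⟨M, E, hE, hES, him1, him2⟩ := concat_chain he heS he' heS'
    refine ⟨M, E, hE, hES, ?_⟩
    intro i hi
    rcases Nat.lt_or_ge i (k + 1) with h | h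
    · exact him1 (hcov i (by omega))
    · have : i = k + 1 := by omega
      subst this
      exact him2 ⟨m', by simp, he'.2.2.1⟩

lemma ict_of_minimal [CompactSpace X] {M : Set X}
    (hMne : M.Nonempty) (hMc : IsClosed M) (hMf : Set.MapsTo f M M)
    (hmin : ∀ A : Set X, A.Nonempty → IsClosed A → Set.MapsTo f A A → A ⊆ M → A = M) :
    InternallyChainTransitive f M := by
  intro x hx y hy ε hε
  set D : Set X := {z | ∀ δ > 0, EpsChainIn f M δ x z} with hD
  have hDM : D ⊆ M := by
    intro z hz
    obtain ⟨n, c, hc, hS⟩ := hz 1 one_pos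
    have := hS n le_rfl
    rwa [hc.2.2.1] at this
  have hDne : D.Nonempty := by
    refine ⟨f x, fun δ hδ => ⟨1, fun i => if i = 0 then x else f x, ⟨le_rfl, by simp, by simp, ?_⟩, ?_⟩⟩
    · intro i hi
      have : i = 0 := by omega
      subst this
      simp [hδ]
    · intro i hi
      interval_cases i
      · simpa using hx
      · simpa using hMf hx
  have hDmt : Set.MapsTo f D D := by
    intro z hz δ hδ
    obtain ⟨n, c, ⟨hn, h0, hn', hs⟩, hS⟩ := hz δ hδ
    refine ⟨n + 1, fun i => if i ≤ n then c i else f z, ⟨by omega, by simp [h0], ?_, ?_⟩, ?_⟩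
    · simp
    · intro i hi
      by_cases h : i < n
      · have h1 : i ≤ n := by omega
        have h2 : i + 1 ≤ n := by omega
        simp only [h1, h2, if_true]
        exact hs i h
      · have : i = n := by omega
        subst this
        have h2 : ¬ (i + 1 ≤ i) := by omega
        simp only [le_refl, if_true, h2, if_false, hn']
        simpa using hδ
    · intro i hi
      by_cases h : i ≤ n
      · simp only [h, if_true]; exact hS i h
      · simp only [h, if_false]; exact hMf (hDM hz)
  have hDcl : IsClosed D := by
    refine isClosed_of_closure_subset ?_
    intro z hz
    have hzM : z ∈ M := by
      have h' : closure D ⊆ closure M := closure_mono hDM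
      rw [hMc.closure_eq] at h'
      exact h' hz
    intro δ hδ
    obtain ⟨w, hwD, hwz⟩ := Metric.mem_closure_iff.mp hz (δ / 2) (by positivity)
    obtain ⟨n, c, ⟨hn, h0, hn', hs⟩, hS⟩ := hwD (δ / 2) (by positivity)
    refine ⟨n, fun i => if i = n then z else c i, ⟨hn, ?_, by simp, ?_⟩, ?_⟩
    · have h00 : (0 : ℕ) ≠ n := by omega
      simp [h00, h0]
    · intro i hi
      have hi' : i ≠ n := by omega
      simp only [hi', if_false]
      by_cases h : i + 1 = n
      · simp only [h, if_pos rfl]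
        have hst : dist (f (c i)) (c n) < δ / 2 := by
          have := hs i hi
          rwa [h] at this
        have hwz' : dist (c n) z < δ / 2 := by
          rw [hn', dist_comm]
          exact hwz
        calc dist (f (c i)) z ≤ dist (f (c i)) (c n) + dist (c n) z := dist_triangle _ _ _
          _ < δ / 2 + δ / 2 := by linarith
          _ = δ := by ring
      · simp only [h, if_false]
        exact lt_trans (hs i hi) (by linarith)
    · intro i hi
      by_cases h : i = n
      · simpa [h] using hzM
      · simp only [h, if_false]
        exact hS i hi
  have hDeq := hmin D hDne hDcl hDmt hDM
  rw [← hDeq] at hy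
  exact hy ε hε

lemma exists_min_invariant [CompactSpace X] [Nonempty X] (g : X → X) :
    ∃ M : Set X, M.Nonempty ∧ IsClosed M ∧ Set.MapsTo g M M ∧
      ∀ A : Set X, A.Nonempty → IsClosed A → Set.MapsTo g A A → A ⊆ M → A = M := by
  set 𝔐 : Set (Set X) := {A | A.Nonempty ∧ IsClosed A ∧ Set.MapsTo g A A} with h𝔐
  have hz : ∀ c ⊆ 𝔐, IsChain (· ⊆ ·) c → c.Nonempty → ∃ lb ∈ 𝔐, ∀ s ∈ c, lb ⊆ s := by
    intro c hc hchain hcne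
    haveI : Nonempty c := hcne.to_subtype
    have hdir : Directed (· ⊇ ·) (fun A : c => (A : Set X)) := by
      intro A B
      rcases hchain.total A.2 B.2 with h | h
      · exact ⟨A, le_rfl, h⟩
      · exact ⟨B, h, le_rfl⟩
    have hne : (⋂ A : c, (A : Set X)).Nonempty := by
      apply IsCompact.nonempty_iInter_of_directed_nonempty_isCompact_isClosed _ hdir
      · exact fun A => (hc A.2).1
      · exact fun A => (hc A.2).2.1.isCompact
      · exact fun A => (hc A.2).2.1
    refine ⟨⋂ A : c, (A : Set X), ⟨hne, ?_, ?_⟩, ?_⟩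
    · exact isClosed_iInter fun A => (hc A.2).2.1
    · intro y hy
      simp only [Set.mem_iInter] at hy ⊢
      exact fun A => (hc A.2).2.2 (hy A)
    · intro s hs
      exact Set.iInter_subset_of_subset ⟨s, hs⟩ le_rfl
  obtain ⟨M, -, hMmem, hMmin⟩ := zorn_superset_nonempty 𝔐 hz Set.univ
      ⟨Set.univ_nonempty, isClosed_univ, Set.mapsTo_univ g _⟩
  exact ⟨M, hMmem.1, hMmem.2.1, hMmem.2.2,
    fun A hA1 hA2 hA3 hA4 => le_antisymm hA4 (hMmin ⟨hA1, hA2, hA3⟩ hA4)⟩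


lemma build_chains {M : Set X} (hICT : InternallyChainTransitive f M) {x : X} (hx : x ∈ M)
    {ε : ℕ → ℝ} (hε : ∀ n, 0 < ε n) :
    ∃ N : ℕ → ℕ, ∃ c : ℕ → ℕ → X,
      (∀ n, IsEpsChain f (ε n) (N n) (c n) x x ∧ ∀ i ≤ N n, c n i ∈ M) ∧
      ∀ n, c n '' Set.Iic (N n) ⊆ c (n + 1) '' Set.Iic (N (n + 1)) := by
  classical
  obtain ⟨n0, c0, hc0, hS0⟩ := hICT x hx x hx (ε 0) (hε 0)
  have step : ∀ (n : ℕ) (q : ℕ × (ℕ → X)),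
      (IsEpsChain f (ε n) q.1 q.2 x x ∧ ∀ i ≤ q.1, q.2 i ∈ M) →
      ∃ r : ℕ × (ℕ → X), (IsEpsChain f (ε (n + 1)) r.1 r.2 x x ∧ ∀ i ≤ r.1, r.2 i ∈ M) ∧
        q.2 '' Set.Iic q.1 ⊆ r.2 '' Set.Iic r.1 := by
    intro n q hq
    obtain ⟨m, e, he, heS, hcov⟩ := chain_through hICT (hε (n + 1)) q.2 q.1 hq.2
    rw [hq.1.2.1, hq.1.2.2.1] at he
    refine ⟨(m, e), ⟨he, heS⟩, ?_⟩
    rintro _ ⟨i, hi, rfl⟩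
    exact hcov i hi
  let T : ℕ → Type _ := fun n =>
    {q : ℕ × (ℕ → X) // IsEpsChain f (ε n) q.1 q.2 x x ∧ ∀ i ≤ q.1, q.2 i ∈ M}
  let g : (n : ℕ) → T n := fun n => Nat.rec (⟨(n0, c0), hc0, hS0⟩ : T 0)
    (fun n t => ⟨Classical.choose (step n t.1 t.2),
      (Classical.choose_spec (step n t.1 t.2)).1⟩) n
  refine ⟨fun n => (g n).1.1, fun n => (g n).1.2, fun n => (g n).2, fun n => ?_⟩
  exact (Classical.choose_spec (step n (g n).1 (g n).2)).2

end Aux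

theorem stmt12 [MetricSpace X] [CompactSpace X] [Nonempty X] (f : X → X) :
    ∃ x : X, NestedChainRel f x x := by
  obtain ⟨M, hMne, hMc, hMf, hmin⟩ := exists_min_invariant f
  have hICT := ict_of_minimal hMne hMc hMf hmin
  obtain ⟨x, hx⟩ := hMne
  have hεpos : ∀ n : ℕ, (0 : ℝ) < (1 / 2 : ℝ) ^ n := fun n => by positivity
  obtain ⟨N, c, h1, h2⟩ := build_chains hICT hx hεpos
  refine ⟨x, fun n => (1 / 2 : ℝ) ^ n, hεpos, ?_, ?_, N, c, fun n => (h1 n).1, h2⟩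
  · intro a b hab
    exact pow_le_pow_of_le_one (by norm_num) (by norm_num) hab
  · exact tendsto_pow_atTop_nhds_zero_of_lt_one (by norm_num) (by norm_num)
end

section
/- Let (X,d) be a compact metric space and f : X → X an arbitrary self-map. Then (X,f) has a 𝒞⊆-transitive subsystem: there is a nonempty closed f-invariant set S such that x 𝒞⊆ y for all x, y ∈ S. -/
open Filter Topology Set

variable {X : Type*}

section AuxProof

lemma depRecAux {α : Type*} {g : ℕ → α → Prop} {r : α → α → Prop}
    (h0 : ∃ a, g 0 a) (hs : ∀ n a, g n a → ∃ b, g (n + 1) b ∧ r a b) :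
    ∃ u : ℕ → α, (∀ n, g n (u n)) ∧ ∀ n, r (u n) (u (n + 1)) := by
  choose F hF hr using hs
  let u : ∀ n, {a // g n a} := fun n =>
    Nat.rec ⟨h0.choose, h0.choose_spec⟩ (fun n p => ⟨F n p.1 p.2, hF n p.1 p.2⟩) n
  exact ⟨fun n => (u n).1, fun n => (u n).2, fun n => hr n (u n).1 (u n).2⟩

variable [MetricSpace X]

lemma concat_chain_s13 {f : X → X} {S : Set X} {ε : ℝ} {n m : ℕ} {c c' : ℕ → X} {x y z : X}
    (h : IsEpsChain f ε n c x y) (hc : ∀ i ≤ n, c i ∈ S)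
    (h' : IsEpsChain f ε m c' y z) (hc' : ∀ i ≤ m, c' i ∈ S) :
    ∃ C, IsEpsChain f ε (n + m) C x z ∧ (∀ i ≤ n + m, C i ∈ S) ∧
      (∀ i ≤ n, c i ∈ C '' Set.Iic (n + m)) ∧ (∀ i ≤ m, c' i ∈ C '' Set.Iic (n + m)) := by
  obtain ⟨hn1, hc0, hcn, hstep⟩ := h
  obtain ⟨hm1, hc0', hcm', hstep'⟩ := h'
  set C : ℕ → X := fun i => if i ≤ n then c i else c' (i - n) with hCdef
  have hval : ∀ i, n ≤ i → C i = c' (i - n) := by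
    intro i hi
    rcases eq_or_lt_of_le hi with rfl | hlt
    · simp [hCdef, hcn, hc0'.symm]
    · simp [hCdef, Nat.not_le.mpr hlt]
  refine ⟨C, ⟨by omega, by simp [hCdef, hc0], ?_, ?_⟩, ?_, ?_, ?_⟩
  · rw [hval (n + m) (by omega)]
    simpa using hcm'
  · intro i hi
    by_cases hin : i < n
    · have h1 : C i = c i := by simp [hCdef, hin.le]
      have h2 : C (i + 1) = c (i + 1) := by
        have : i + 1 ≤ n := hin
        simp [hCdef, this]
      rw [h1, h2]; exact hstep i hin
    · push_neg at hin
      rw [hval i hin, hval (i + 1) (by omega)]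
      have : i + 1 - n = (i - n) + 1 := by omega
      rw [this]
      exact hstep' (i - n) (by omega)
  · intro i hi
    by_cases hin : i ≤ n
    · simpa [hCdef, hin] using hc i hin
    · push_neg at hin
      rw [hval i hin.le]
      exact hc' (i - n) (by omega)
  · intro i hi
    exact ⟨i, by simp only [Set.mem_Iic]; omega, by simp [hCdef, hi]⟩
  · intro i hi
    refine ⟨n + i, by simp only [Set.mem_Iic]; omega, ?_⟩
    rw [hval (n + i) (by omega)]
    congr 1
    omega

lemma through_points {f : X → X} {S : Set X} (hS : InternallyChainTransitive f S)
    {ε : ℝ} (hε : 0 < ε) (q : ℕ → X) :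
    ∀ N, (∀ i ≤ N, q i ∈ S) → ∃ n c, IsEpsChain f ε n c (q 0) (q N) ∧ (∀ i ≤ n, c i ∈ S)
      ∧ ∀ i ≤ N, q i ∈ c '' Set.Iic n := by
  intro N
  induction N with
  | zero =>
    intro hq
    obtain ⟨n, c, hch, hmem⟩ := hS (q 0) (hq 0 le_rfl) (q 0) (hq 0 le_rfl) ε hε
    refine ⟨n, c, hch, hmem, ?_⟩
    intro i hi
    have : i = 0 := Nat.le_zero.mp hi
    subst this
    exact ⟨0, by simp, hch.2.1⟩
  | succ N ih =>
    intro hq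
    obtain ⟨n, c, hch, hmem, him⟩ := ih (fun i hi => hq i (hi.trans (Nat.le_succ N)))
    obtain ⟨m, c', hch', hmem'⟩ :=
      hS (q N) (hq N (Nat.le_succ N)) (q (N + 1)) (hq _ le_rfl) ε hε
    obtain ⟨C, hC, hCS, him1, him2⟩ := concat_chain_s13 hch hmem hch' hmem'
    refine ⟨n + m, C, hC, hCS, ?_⟩
    intro i hi
    rcases Nat.lt_or_ge i (N + 1) with h | h
    · obtain ⟨j, hj, hje⟩ := him i (by omega)
      rw [← hje]
      exact him1 j hj
    · have : i = N + 1 := by omega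
      subst this
      have := him2 m le_rfl
      rwa [hch'.2.2.1] at this

lemma minimal_ict {f : X → X} {M : Set X}
    (hcl : IsClosed M) (hmap : Set.MapsTo f M M)
    (hmin : ∀ S, S ⊆ M → S.Nonempty → IsClosed S → Set.MapsTo f S S → S = M) :
    InternallyChainTransitive f M := by
  intro x hx y hy ε hε
  set A : ℝ → Set X := fun ε' => {z | EpsChainIn f M ε' x z} with hA
  set B : Set X := {z | ∀ ε' > ε / 2, z ∈ A ε'} with hB
  have hAsub : ∀ ε', A ε' ⊆ M := by
    rintro ε' z ⟨nn, cc, hch, hmem⟩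
    rw [← hch.2.2.1]
    exact hmem nn le_rfl
  have hfx : ∀ ε' > (0:ℝ), f x ∈ A ε' := by
    intro ε' hε'
    refine ⟨1, fun i => if i = 0 then x else f x, ⟨le_rfl, by simp, by simp, ?_⟩, ?_⟩
    · intro i hi
      have : i = 0 := by omega
      subst this
      simpa using hε'
    · intro i hi
      by_cases h0 : i = 0
      · simpa [h0] using hx
      · simpa [h0] using hmap hx
  have hBsub : B ⊆ M := fun z hz => hAsub (ε / 2 + 1) (hz _ (by linarith))
  have hBne : B.Nonempty := ⟨f x, fun ε' h => hfx ε' (by linarith)⟩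
  have hBmap : Set.MapsTo f B B := by
    intro z hz ε' hε'
    obtain ⟨nn, cc, ⟨hn1, h0, hn', hstep⟩, hmem⟩ := hz ε' hε'
    have hzM : z ∈ M := hBsub hz
    refine ⟨nn + 1, fun i => if i ≤ nn then cc i else f z, ⟨by omega, by simp [h0], by simp, ?_⟩, ?_⟩
    · intro i hi
      by_cases hin : i < nn
      · have hle1 : i ≤ nn := hin.le
        have hle2 : i + 1 ≤ nn := hin
        simpa [hle1, hle2] using hstep i hin
      · have hieq : i = nn := by omega
        subst hieq
        show dist (f (if i ≤ i then cc i else f z)) (if i + 1 ≤ i then cc (i + 1) else f z) < ε'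
        have ht2 : ¬ (i + 1 ≤ i) := by omega
        rw [if_pos le_rfl, if_neg ht2, hn', dist_self]
        linarith
    · intro i hi
      by_cases hin : i ≤ nn
      · simpa [hin] using hmem i hin
      · simpa [hin] using hmap hzM
  have hBcl : IsClosed B := by
    apply isClosed_of_closure_subset
    intro z hzc ε' hε'
    set ε'' : ℝ := (ε / 2 + ε') / 2 with hε''def
    have h1 : ε / 2 < ε'' := by rw [hε''def]; linarith
    have h2 : ε'' < ε' := by rw [hε''def]; linarith
    obtain ⟨w, hwB, hwd⟩ := Metric.mem_closure_iff.mp hzc (ε' - ε'') (by linarith)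
    obtain ⟨nn, cc, ⟨hn1, h0, hn', hstep⟩, hmem⟩ := hwB ε'' h1
    have hzM : z ∈ M := by
      have : closure B ⊆ M := hcl.closure_subset_iff.mpr hBsub
      exact this hzc
    refine ⟨nn, fun i => if i = nn then z else cc i, ⟨hn1, ?_, by simp, ?_⟩, ?_⟩
    · have : (0:ℕ) ≠ nn := by omega
      simp [this, h0]
    · intro i hi
      have hine : i ≠ nn := by omega
      show dist (f (if i = nn then z else cc i)) (if i + 1 = nn then z else cc (i + 1)) < ε'
      rw [if_neg hine]
      by_cases hsucc : i + 1 = nn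
      · rw [if_pos hsucc]
        have hd1 : dist (f (cc i)) (cc (i + 1)) < ε'' := hstep i hi
        have hccw : cc (i + 1) = w := by rw [hsucc, hn']
        rw [hccw] at hd1
        calc dist (f (cc i)) z ≤ dist (f (cc i)) (cc (i + 1)) + dist (cc (i + 1)) z :=
              dist_triangle _ _ _
          _ < ε'' + (ε' - ε'') := by
              rw [hccw, dist_comm w z]
              exact add_lt_add hd1 hwd
          _ = ε' := by ring
      · rw [if_neg hsucc]
        exact (hstep i hi).trans h2
    · intro i hi
      by_cases hin : i = nn
      · simpa [hin] using hzM
      · simpa [hin] using hmem i hi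
  have hBM : B = M := hmin B hBsub hBne hBcl hBmap
  have hyB : y ∈ B := hBM ▸ hy
  exact hyB ε (by linarith)

end AuxProof

theorem stmt13 [MetricSpace X] [CompactSpace X] [Nonempty X] (f : X → X) :
    ∃ S : Set X, S.Nonempty ∧ IsClosed S ∧ Set.MapsTo f S S ∧
      ∀ x ∈ S, ∀ y ∈ S, NestedChainRel f x y := by
  have Hzorn : ∀ c ⊆ {S : Set X | S.Nonempty ∧ IsClosed S ∧ Set.MapsTo f S S},
      IsChain (· ⊆ ·) c → c.Nonempty →
      ∃ lb ∈ {S : Set X | S.Nonempty ∧ IsClosed S ∧ Set.MapsTo f S S}, ∀ s ∈ c, lb ⊆ s := by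
    intro c hc hchain hcne
    have : Nonempty c := hcne.to_subtype
    refine ⟨⋂₀ c, ⟨?_, ?_, ?_⟩, fun s hs => Set.sInter_subset_of_mem hs⟩
    · rw [Set.sInter_eq_iInter]
      apply IsCompact.nonempty_iInter_of_directed_nonempty_isCompact_isClosed
      · rintro ⟨s, hs⟩ ⟨t, ht⟩
        rcases eq_or_ne s t with rfl | hne
        · exact ⟨⟨s, hs⟩, subset_rfl, subset_rfl⟩
        · rcases hchain hs ht hne with h | h
          · exact ⟨⟨s, hs⟩, subset_rfl, h⟩
          · exact ⟨⟨t, ht⟩, h, subset_rfl⟩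
      · exact fun s => (hc s.2).1
      · exact fun s => ((hc s.2).2.1).isCompact
      · exact fun s => (hc s.2).2.1
    · exact isClosed_sInter fun s hs => (hc hs).2.1
    · intro z hz
      rw [Set.mem_sInter] at hz ⊢
      exact fun s hs => (hc hs).2.2 (hz s hs)
  obtain ⟨M, -, hMmem, hMmin⟩ :=
    zorn_superset_nonempty {S : Set X | S.Nonempty ∧ IsClosed S ∧ Set.MapsTo f S S}
      Hzorn Set.univ ⟨Set.univ_nonempty, isClosed_univ, Set.mapsTo_univ f _⟩
  · obtain ⟨hMne, hMcl, hMmap⟩ := hMmem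
    have hmin : ∀ S, S ⊆ M → S.Nonempty → IsClosed S → Set.MapsTo f S S → S = M := by
      intro S hSM hSne hScl hSmap
      exact le_antisymm hSM (hMmin ⟨hSne, hScl, hSmap⟩ hSM)
    have hict := minimal_ict hMcl hMmap hmin
    refine ⟨M, hMne, hMcl, hMmap, ?_⟩
    intro x hx y hy
    set εs : ℕ → ℝ := fun n => (1 / 2 : ℝ) ^ n with hεs
    have hεpos : ∀ n, 0 < εs n := fun n => pow_pos (by norm_num) n
    set g : ℕ → ℕ × (ℕ → X) → Prop := fun n t =>
      IsEpsChain f (εs n) t.1 t.2 x y ∧ ∀ i ≤ t.1, t.2 i ∈ M with hg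
    set r : ℕ × (ℕ → X) → ℕ × (ℕ → X) → Prop := fun t t' =>
      t.2 '' Set.Iic t.1 ⊆ t'.2 '' Set.Iic t'.1 with hr
    have h0 : ∃ a, g 0 a := by
      obtain ⟨n, c, hch, hmem⟩ := hict x hx y hy (εs 0) (hεpos 0)
      exact ⟨(n, c), hch, hmem⟩
    have hs : ∀ n a, g n a → ∃ b, g (n + 1) b ∧ r a b := by
      rintro n ⟨N, q⟩ ⟨hch, hmem⟩
      obtain ⟨m, c, hch', hmem', him⟩ :=
        through_points hict (hεpos (n + 1)) q N hmem
      have hq0 : q 0 = x := hch.2.1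
      have hqN : q N = y := hch.2.2.1
      rw [hq0, hqN] at hch'
      refine ⟨(m, c), ⟨hch', hmem'⟩, ?_⟩
      rintro z ⟨i, hi, rfl⟩
      exact him i hi
    obtain ⟨u, hu, hur⟩ := depRecAux h0 hs
    refine ⟨εs, hεpos, ?_, ?_, fun n => (u n).1, fun n => (u n).2,
      fun n => (hu n).1, hur⟩
    · intro a b hab
      exact pow_le_pow_of_le_one (by norm_num) (by norm_num) hab
    · exact tendsto_pow_atTop_nhds_zero_of_lt_one (by norm_num) (by norm_num)
end

section
/- Let (X,d) be a compact metric space and f : X → X an arbitrary self-map. If X itself is chain-transitive (x 𝒞 y for all x, y ∈ X), then the nested-chain relation coincides with the chain relation: 𝒞⊆ = 𝒞 = X × X. -/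
open Filter Topology Set

variable {X : Type*}

section Aux
variable [PseudoMetricSpace X]

lemma chain_concat {f : X → X} {ε : ℝ} {n₁ n₂ : ℕ} {c₁ c₂ : ℕ → X} {a b d : X}
    (h₁ : IsEpsChain f ε n₁ c₁ a b) (h₂ : IsEpsChain f ε n₂ c₂ b d) :
    ∃ c, IsEpsChain f ε (n₁ + n₂) c a d ∧
      c₁ '' Set.Iic n₁ ⊆ c '' Set.Iic (n₁ + n₂) ∧
      c₂ '' Set.Iic n₂ ⊆ c '' Set.Iic (n₁ + n₂) := by
  obtain ⟨hn₁, hc₁0, hc₁n, hs₁⟩ := h₁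
  obtain ⟨hn₂, hc₂0, hc₂n, hs₂⟩ := h₂
  set c : ℕ → X := fun i => if i ≤ n₁ then c₁ i else c₂ (i - n₁) with hc
  have hA : ∀ i ≤ n₁, c i = c₁ i := by intro i hi; simp [hc, hi]
  have hB : ∀ i, n₁ ≤ i → c i = c₂ (i - n₁) := by
    intro i hi
    by_cases h : i ≤ n₁
    · have : i = n₁ := le_antisymm h hi
      subst this
      simp [hc, hc₁n, hc₂0]
    · simp [hc, h]
  refine ⟨c, ⟨le_trans hn₁ (Nat.le_add_right _ _), ?_, ?_, ?_⟩, ?_, ?_⟩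
  · rw [hA 0 (Nat.zero_le _)]; exact hc₁0
  · rw [hB (n₁ + n₂) (Nat.le_add_right _ _)]
    simpa using hc₂n
  · intro i hi
    by_cases h : i < n₁
    · rw [hA i h.le, hA (i + 1) h]
      exact hs₁ i h
    · push_neg at h
      rw [hB i h, hB (i + 1) (le_trans h (Nat.le_succ _))]
      have h1 : i + 1 - n₁ = (i - n₁) + 1 := by omega
      rw [h1]
      exact hs₂ _ (by omega)
  · rintro _ ⟨i, hi, rfl⟩
    exact ⟨i, by simpa using le_trans (Set.mem_Iic.mp hi) (Nat.le_add_right _ _),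
      (hA i hi).symm ▸ rfl⟩
  · rintro _ ⟨j, hj, rfl⟩
    refine ⟨n₁ + j, Set.mem_Iic.mpr (Nat.add_le_add_left (Set.mem_Iic.mp hj) _), ?_⟩
    rw [hB (n₁ + j) (Nat.le_add_right _ _), Nat.add_sub_cancel_left]

lemma chain_extend {f : X → X} (hC : ∀ x y : X, ChainRel f x y)
    {ε : ℝ} (hε : 0 < ε) (N₀ : ℕ) (c₀ : ℕ → X) :
    ∃ N c, IsEpsChain f ε N c (c₀ 0) (c₀ N₀) ∧ c₀ '' Set.Iic N₀ ⊆ c '' Set.Iic N := by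
  induction N₀ with
  | zero =>
    obtain ⟨n, c, hch⟩ := hC (c₀ 0) (c₀ 0) ε hε
    refine ⟨n, c, hch, ?_⟩
    rintro _ ⟨i, hi, rfl⟩
    have : i = 0 := Nat.le_zero.mp hi
    subst this
    exact ⟨0, Set.mem_Iic.mpr (Nat.zero_le _), hch.2.1⟩
  | succ m ih =>
    obtain ⟨n₁, c₁, h₁, hsub₁⟩ := ih
    obtain ⟨n₂, c₂, h₂⟩ := hC (c₀ m) (c₀ (m + 1)) ε hε
    obtain ⟨c, hch, hs1, hs2⟩ := chain_concat h₁ h₂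
    refine ⟨n₁ + n₂, c, hch, ?_⟩
    rintro _ ⟨i, hi, rfl⟩
    rcases Nat.le_succ_iff.mp (Set.mem_Iic.mp hi) with h | h
    · exact hs1 (hsub₁ ⟨i, Set.mem_Iic.mpr h, rfl⟩)
    · subst h
      exact hs2 ⟨n₂, Set.mem_Iic.mpr le_rfl, h₂.2.2.1⟩

end Aux

theorem stmt14 [MetricSpace X] [CompactSpace X] (f : X → X)
    (hC : ∀ x y : X, ChainRel f x y) :
    (∀ x y : X, NestedChainRel f x y) ∧ (∀ x y : X, ChainRel f x y) := by
  refine ⟨fun x y => ?_, hC⟩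
  set ε : ℕ → ℝ := fun n => 1 / (n + 1 : ℝ) with hεdef
  have hεpos : ∀ n, 0 < ε n := fun n => by positivity
  -- choice functions for extending
  have ext : ∀ n : ℕ, ∀ (N₀ : ℕ) (c₀ : ℕ → X),
      ∃ N c, IsEpsChain f (ε (n + 1)) N c (c₀ 0) (c₀ N₀) ∧
        c₀ '' Set.Iic N₀ ⊆ c '' Set.Iic N :=
    fun n N₀ c₀ => chain_extend hC (hεpos (n + 1)) N₀ c₀
  choose Nf cf hchains hsubs using ext
  obtain ⟨N₀, c₀, h₀⟩ := hC x y (ε 0) (hεpos 0)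
  set seq : ℕ → ℕ × (ℕ → X) := fun n =>
    Nat.rec (⟨N₀, c₀⟩ : ℕ × (ℕ → X))
      (fun n p => (Nf n p.1 p.2, cf n p.1 p.2)) n with hseq
  have hseqsucc : ∀ n, seq (n + 1) = (Nf n (seq n).1 (seq n).2, cf n (seq n).1 (seq n).2) :=
    fun n => rfl
  have hmain : ∀ n, IsEpsChain f (ε n) (seq n).1 (seq n).2 x y := by
    intro n
    induction n with
    | zero => exact h₀
    | succ m ih =>
      have h := hchains m (seq m).1 (seq m).2
      rw [ih.2.1, ih.2.2.1] at h
      exact h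
  refine ⟨ε, hεpos, ?_, ?_, fun n => (seq n).1, fun n => (seq n).2, hmain, ?_⟩
  · intro a b hab
    apply one_div_le_one_div_of_le
    · positivity
    · exact_mod_cast Nat.add_le_add_right hab 1
  · exact tendsto_one_div_add_atTop_nhds_zero_nat
  · intro n
    exact hsubs n (seq n).1 (seq n).2
end

section
/- There exists a subshift Σ of the full shift on {0,1}^ℕ (with the shift map σ, which is continuous) and points u = 1^∞, v = 0^∞ ∈ Σ such that u 𝒞 v but not u 𝒞⊆ v. Concretely, Σ is the closure of the set {σ^j(1^k 0^k 1^∞) : j ≥ 0, k ≥ 1}, i.e., Σ = {σ^j(1^k 0^k 1^∞)} ∪ {1^∞, 0^∞}, with metric d(u,v) = 2^{-(n-1)} where n is the first index at which u and v differ. -/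
open Filter Topology Set

variable {X : Type*}

/-- The full shift on `{0,1}^ℕ`. -/
def shift (u : ℕ → Bool) : ℕ → Bool := fun n => u (n + 1)

/-- The word `1^k 0^k 1^∞`. -/
def wrd (k : ℕ) : ℕ → Bool := fun n => if n < k then true else if n < 2 * k then false else true

def ones : ℕ → Bool := fun _ => true

def zeros : ℕ → Bool := fun _ => false

/-- The subshift `Σ = {σ^j(1^k 0^k 1^∞) : j ≥ 0, k ≥ 1} ∪ {1^∞, 0^∞}`. -/
def Sig : Set (ℕ → Bool) :=
  {w | ∃ j k, 1 ≤ k ∧ w = shift^[j] (wrd k)} ∪ {ones, zeros}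

/-- The metric `dist u v = (1/2)^(first index where u,v differ)`, i.e. `2^{-(n-1)}` for the
first 1-based index `n` at which `u` and `v` differ. -/
noncomputable local instance : MetricSpace (ℕ → Bool) := PiNat.metricSpace

lemma shift_iter (u : ℕ → Bool) (j n : ℕ) : shift^[j] u n = u (n + j) := by
  induction j generalizing u with
  | zero => rfl
  | succ j ih =>
    rw [Function.iterate_succ_apply, ih]
    rfl

lemma wrd_true {k m : ℕ} : wrd k m = true ↔ (m < k ∨ 2 * k ≤ m) := by
  unfold wrd
  split_ifs with h1 h2 <;> simp <;> omega

lemma iter_wrd_true {j k n : ℕ} : shift^[j] (wrd k) n = true ↔ (n + j < k ∨ 2 * k ≤ n + j) := by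
  rw [shift_iter]; exact wrd_true

lemma ones_mem : ones ∈ Sig := Or.inr (Or.inl rfl)

lemma zeros_mem : zeros ∈ Sig := Or.inr (Or.inr rfl)

lemma iter_mem {j k : ℕ} (hk : 1 ≤ k) : shift^[j] (wrd k) ∈ Sig := Or.inl ⟨j, k, hk, rfl⟩

lemma shift_ones : shift ones = ones := rfl

lemma shift_zeros : shift zeros = zeros := rfl

lemma iter_ne_ones {j k : ℕ} (hj : j < k) : shift^[j] (wrd k) ≠ ones := by
  intro h
  have := congrFun h (k - j)
  rw [shift_iter] at this
  have hkj : k - j + j = k := by omega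
  rw [hkj] at this
  have : wrd k k = true := this
  rw [wrd_true] at this
  omega

lemma ones_ne_zeros : ones ≠ zeros := by
  intro h
  have := congrFun h 0
  simp [ones, zeros] at this

lemma dist_le_of_agree {u v : ℕ → Bool} {m : ℕ} (h : ∀ i < m, u i = v i) :
    dist u v ≤ (1 / 2 : ℝ) ^ m :=
  PiNat.mem_cylinder_iff_dist_le.mp (fun i hi => h i hi)

lemma agree_of_dist_lt {u v : ℕ → Bool} {m : ℕ} (h : dist u v < (1 / 2 : ℝ) ^ m) :
    ∀ i ≤ m, u i = v i := fun _ hi => PiNat.apply_eq_of_dist_lt h hi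

/-- Rigidity: the only point of `Sig` whose shift agrees with `σ^j(wrd k)` (for `j < k`)
on the first `2k+1` coordinates is `σ^(j-1)(wrd k)`, and this forces `1 ≤ j`. -/
lemma rigidity {q : ℕ → Bool} {j k : ℕ} (hk : 1 ≤ k) (hj : j < k) (hq : q ∈ Sig)
    (h : ∀ n ≤ 2 * k, shift q n = shift^[j] (wrd k) n) :
    1 ≤ j ∧ q = shift^[j - 1] (wrd k) := by
  rcases hq with ⟨j', k', hk', rfl⟩ | hq | hq
  · -- q = σ^{j'}(wrd k')
    have hsh : ∀ n, shift (shift^[j'] (wrd k')) n = wrd k' (n + (j' + 1)) := by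
      intro n
      rw [← Function.iterate_succ_apply' shift, shift_iter]
    have key : ∀ n ≤ 2 * k,
        ((n + (j' + 1) < k' ∨ 2 * k' ≤ n + (j' + 1)) ↔ (n + j < k ∨ 2 * k ≤ n + j)) := by
      intro n hn
      have e := h n hn
      rw [hsh, shift_iter] at e
      rw [← wrd_true, ← wrd_true, e]
    have f1 := key (k - j - 1) (by omega)
    have f2 := key (k - j) (by omega)
    have f3 := key (2 * k - j - 1) (by omega)
    have f4 := key (2 * k - j) (by omega)
    have hout : k' = k ∧ j' = j - 1 ∧ 1 ≤ j := by omega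
    obtain ⟨rfl, rfl, h1⟩ := hout
    exact ⟨h1, rfl⟩
  · -- q = ones
    exfalso
    subst hq
    have e := h (k - j) (by omega)
    rw [shift_iter] at e
    have hkj : k - j + j = k := by omega
    rw [hkj] at e
    have : wrd k k = true := e.symm.trans rfl
    rw [wrd_true] at this
    omega
  · -- q = zeros
    exfalso
    subst hq
    have e := h (2 * k - j) (by omega)
    rw [shift_iter] at e
    have hkj : 2 * k - j + j = 2 * k := by omega
    rw [hkj] at e
    have : wrd k (2 * k) = false := e.symm.trans rfl
    have h2 : wrd k (2 * k) = true := wrd_true.mpr (by omega)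
    rw [h2] at this
    simp at this

lemma classify {w : ℕ → Bool} (hw : w ∈ Sig) (hne : w ≠ ones) (h0 : w 0 = true) :
    ∃ j k, 1 ≤ k ∧ j < k ∧ w = shift^[j] (wrd k) := by
  rcases hw with ⟨j, k, hk, rfl⟩ | hw | hw
  · by_cases hjk : j < k
    · exact ⟨j, k, hk, hjk, rfl⟩
    · by_cases hj2 : 2 * k ≤ j
      · exfalso
        apply hne
        funext n
        exact iter_wrd_true.mpr (Or.inr (by omega))
      · exfalso
        have : shift^[j] (wrd k) 0 = true := h0
        rw [iter_wrd_true] at this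
        omega
  · exact absurd hw hne
  · exfalso
    subst hw
    simp [zeros] at h0

lemma nested_trans {α : Type*} {c : ℕ → ℕ → α} {N : ℕ → ℕ}
    (h : ∀ n, c n '' Set.Iic (N n) ⊆ c (n + 1) '' Set.Iic (N (n + 1)))
    {m n : ℕ} (hmn : m ≤ n) : c m '' Set.Iic (N m) ⊆ c n '' Set.Iic (N n) := by
  induction n, hmn using Nat.le_induction with
  | base => exact subset_rfl
  | succ n hmn ih => exact ih.trans (h n)

/-- The explicit chain used for the positive direction. -/
def cfun (k : ℕ) : ℕ → (ℕ → Bool) :=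
  fun i => if i = 0 then ones else if i ≤ k then shift^[i - 1] (wrd k) else zeros

lemma cfun_zero (k : ℕ) : cfun k 0 = ones := by simp [cfun]

lemma cfun_mid {k i : ℕ} (h1 : i ≠ 0) (h2 : i ≤ k) : cfun k i = shift^[i - 1] (wrd k) := by
  rw [cfun, if_neg h1, if_pos h2]

lemma cfun_last {k i : ℕ} (h2 : k < i) : cfun k i = zeros := by
  rw [cfun, if_neg (by omega), if_neg (by omega)]

theorem stmt16 :
    Continuous shift ∧ Set.MapsTo shift Sig Sig ∧ ones ∈ Sig ∧ zeros ∈ Sig ∧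
    ChainRelIn shift Sig ones zeros ∧ ¬ NestedChainRelIn shift Sig ones zeros := by
  refine ⟨?_, ?_, ones_mem, zeros_mem, ?_, ?_⟩
  · -- Continuity
    exact continuous_pi fun n => continuous_apply (n + 1)
  · -- MapsTo
    rintro w (⟨j, k, hk, rfl⟩ | hw | hw)
    · exact Or.inl ⟨j + 1, k, hk, (Function.iterate_succ_apply' shift j (wrd k)).symm⟩
    · subst hw; exact ones_mem
    · subst hw; exact zeros_mem
  · -- ChainRelIn
    intro ε hε
    obtain ⟨m, hm⟩ : ∃ m : ℕ, (1 / 2 : ℝ) ^ m < ε :=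
      exists_pow_lt_of_lt_one hε (by norm_num)
    set k := m + 1 with hkdef
    have hppow : (1 / 2 : ℝ) ^ k < ε := by
      refine lt_of_le_of_lt ?_ hm
      exact pow_le_pow_of_le_one (by norm_num) (by norm_num) (by omega)
    refine ⟨k + 1, cfun k, ⟨by omega, cfun_zero k, cfun_last (by omega), ?_⟩, ?_⟩
    · intro i hi
      by_cases h0 : i = 0
      · subst h0
        rw [cfun_zero, cfun_mid (by omega) (by omega), shift_ones]
        calc dist ones (shift^[1 - 1] (wrd k)) ≤ (1 / 2 : ℝ) ^ k := by
              apply dist_le_of_agree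
              intro n hn
              rw [shift_iter]
              exact (wrd_true.mpr (Or.inl (by omega))).symm
          _ < ε := hppow
      · by_cases hik : i < k
        · rw [cfun_mid h0 (by omega), cfun_mid (by omega) (by omega)]
          have : shift (shift^[i - 1] (wrd k)) = shift^[i + 1 - 1] (wrd k) := by
            conv_rhs => rw [show i + 1 - 1 = i - 1 + 1 from by omega]
            exact (Function.iterate_succ_apply' shift (i - 1) (wrd k)).symm
          rw [this, dist_self]
          exact hε
        · have hik' : i = k := by omega
          subst hik'
          rw [cfun_mid h0 (le_refl k), cfun_last (by omega)]
          have : shift (shift^[k - 1] (wrd k)) = shift^[k] (wrd k) := by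
            conv_rhs => rw [show k = k - 1 + 1 from by omega]
            exact (Function.iterate_succ_apply' shift (k - 1) (wrd k)).symm
          rw [this]
          calc dist (shift^[k] (wrd k)) zeros ≤ (1 / 2 : ℝ) ^ k := by
                apply dist_le_of_agree
                intro n hn
                have h1 : shift^[k] (wrd k) n = false := by
                  rw [Bool.eq_false_iff]
                  intro ht
                  rw [iter_wrd_true] at ht
                  omega
                rw [h1]; rfl
            _ < ε := hppow
    · intro i _
      by_cases h0 : i = 0
      · subst h0; rw [cfun_zero]; exact ones_mem
      · by_cases hik : i ≤ k
        · rw [cfun_mid h0 hik]; exact iter_mem (by omega)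
        · rw [cfun_last (by omega)]; exact zeros_mem
  · -- ¬ NestedChainRelIn
    rintro ⟨ε, hεpos, _, htend, N, c, hchain, hnest⟩
    classical
    obtain ⟨n₀, hn₀⟩ : ∃ n, ε n < (1 / 2 : ℝ) ^ 1 :=
      (htend.eventually (gt_mem_nhds (by norm_num : (0:ℝ) < (1/2)^1))).exists
    obtain ⟨⟨hN1, h0, hNz, hjump⟩, hmem⟩ := hchain n₀
    -- last index where the chain is at `ones`
    have hPi : c n₀ (Nat.findGreatest (fun l => c n₀ l = ones) (N n₀)) = ones :=
      Nat.findGreatest_spec (P := fun l => c n₀ l = ones) (Nat.zero_le _) h0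
    set i := Nat.findGreatest (fun l => c n₀ l = ones) (N n₀) with hidef
    have hiN : i ≤ N n₀ := Nat.findGreatest_le _
    have hilt : i < N n₀ := by
      rcases Nat.lt_or_ge i (N n₀) with h | h
      · exact h
      · exfalso
        have hieq : i = N n₀ := le_antisymm hiN h
        rw [hieq, hNz] at hPi
        exact ones_ne_zeros hPi.symm
    have hnext : ¬ (c n₀ (i + 1) = ones) :=
      Nat.findGreatest_is_greatest (hidef ▸ Nat.lt_succ_self i) (by omega)
    have hd := hjump i hilt
    rw [hPi, shift_ones] at hd
    have hd' : dist ones (c n₀ (i + 1)) < (1 / 2 : ℝ) ^ 1 := lt_trans hd hn₀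
    have h00 : c n₀ (i + 1) 0 = true :=
      ((agree_of_dist_lt hd' 0 (by norm_num))).symm
    obtain ⟨j₀, k, hk, hj₀, hw⟩ := classify (hmem (i + 1) (by omega)) hnext h00
    obtain ⟨n₁, hεn₁, hn₁ge⟩ : ∃ n, ε n < (1 / 2 : ℝ) ^ (2 * k) ∧ n₀ ≤ n := by
      have h1 := htend.eventually (gt_mem_nhds (by positivity : (0:ℝ) < (1/2) ^ (2*k)))
      exact (h1.and (eventually_ge_atTop n₀)).exists
    obtain ⟨⟨hN1', h0', hNz', hjump'⟩, hmem'⟩ := hchain n₁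
    have hpmem : shift^[j₀] (wrd k) ∈ c n₁ '' Set.Iic (N n₁) := by
      apply nested_trans hnest hn₁ge
      exact ⟨i + 1, by simpa using (by omega : i + 1 ≤ N n₀), hw⟩
    -- infinite descent
    have descent : ∀ j, j < k → shift^[j] (wrd k) ∈ c n₁ '' Set.Iic (N n₁) → False := by
      intro j
      induction j with
      | zero =>
        rintro hjk ⟨l, hl, hcl⟩
        simp only [Set.mem_Iic] at hl
        have hlne : l ≠ 0 := by
          rintro rfl
          rw [h0'] at hcl
          exact iter_ne_ones hjk hcl.symm
        obtain ⟨l', rfl⟩ := Nat.exists_eq_succ_of_ne_zero hlne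
        have hdl := hjump' l' (by omega)
        rw [hcl] at hdl
        have hdl' : dist (shift (c n₁ l')) (shift^[0] (wrd k)) < (1 / 2 : ℝ) ^ (2 * k) :=
          lt_trans hdl hεn₁
        have := (rigidity hk hjk (hmem' l' (by omega)) (agree_of_dist_lt hdl')).1
        omega
      | succ j ih =>
        rintro hjk ⟨l, hl, hcl⟩
        simp only [Set.mem_Iic] at hl
        have hlne : l ≠ 0 := by
          rintro rfl
          rw [h0'] at hcl
          exact iter_ne_ones hjk hcl.symm
        obtain ⟨l', rfl⟩ := Nat.exists_eq_succ_of_ne_zero hlne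
        have hdl := hjump' l' (by omega)
        rw [hcl] at hdl
        have hdl' : dist (shift (c n₁ l')) (shift^[j + 1] (wrd k)) < (1 / 2 : ℝ) ^ (2 * k) :=
          lt_trans hdl hεn₁
        obtain ⟨-, heq⟩ := rigidity hk hjk (hmem' l' (by omega)) (agree_of_dist_lt hdl')
        have hmem2 : shift^[j] (wrd k) ∈ c n₁ '' Set.Iic (N n₁) :=
          ⟨l', by simpa using (by omega : l' ≤ N n₁), by rw [heq, Nat.add_sub_cancel]⟩
        exact ih (by omega) hmem2
    exact descent j₀ hj₀ hpmem
end

section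
/- Consider the circle rotation on a finite set: S = {0, 1, …, n−1} with f(x) = (x+1) mod n, n ≥ 2, viewed as a compact (discrete) metric space. Every proper nonempty subset M ⊊ S is 𝒞⊆-transitive (indeed 𝒞-transitive) but not internally chain transitive. Hence chain-transitivity does not imply internal chain transitivity. -/
open Filter Topology Set

variable {X : Type*}

open Fin.NatCast Fin.CommRing

lemma rot_chain (n : ℕ) [MetricSpace (Fin (n + 2))] (x y : Fin (n + 2)) (ε : ℝ) (hε : 0 < ε) :
    IsEpsChain (fun z : Fin (n + 2) => z + 1) ε ((y - x).val + (n + 2))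
      (fun i => x + (i : Fin (n + 2))) x y := by
  refine ⟨by omega, by simp, ?_, ?_⟩
  · have h2 : ((n + 2 : ℕ) : Fin (n + 2)) = 0 := Fin.natCast_self _
    show x + (((y - x).val + (n + 2) : ℕ) : Fin (n + 2)) = y
    rw [Nat.cast_add, Fin.cast_val_eq_self, h2, add_zero]
    ring
  · intro i _
    have : ((i + 1 : ℕ) : Fin (n+2)) = (i : Fin (n+2)) + 1 := by push_cast; ring
    simp [this, add_assoc, hε]

theorem stmt19 (n : ℕ) [MetricSpace (Fin (n + 2))] (M : Set (Fin (n + 2)))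
    (hne : M.Nonempty) (hproper : M ≠ Set.univ) :
    (∀ x ∈ M, ∀ y ∈ M, NestedChainRel (fun z : Fin (n + 2) => z + 1) x y) ∧
    (∀ x ∈ M, ∀ y ∈ M, ChainRel (fun z : Fin (n + 2) => z + 1) x y) ∧
    ¬ InternallyChainTransitive (fun z : Fin (n + 2) => z + 1) M := by
  have key : ∀ x y : Fin (n + 2), ∀ ε : ℝ, 0 < ε →
      EpsChain (fun z : Fin (n + 2) => z + 1) ε x y :=
    fun x y ε hε => ⟨_, _, rot_chain n x y ε hε⟩
  refine ⟨?_, fun x _ y _ ε hε => key x y ε hε, ?_⟩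
  · intro x _ y _
    refine ⟨fun k => (1/2 : ℝ)^k, fun k => by positivity, ?_, ?_,
      fun _ => (y - x).val + (n + 2), fun _ => (fun i => x + (i : Fin (n + 2))), ?_, ?_⟩
    · exact fun a b h => pow_le_pow_of_le_one (by norm_num) (by norm_num) h
    · exact tendsto_pow_atTop_nhds_zero_of_lt_one (by norm_num) (by norm_num)
    · exact fun k => rot_chain n x y _ (by positivity)
    · exact fun k => subset_rfl
  · intro hICT
    -- minimal positive distance
    set P := Finset.univ.filter (fun p : Fin (n+2) × Fin (n+2) => p.1 ≠ p.2) with hP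
    have hPne : P.Nonempty := ⟨(0, 1), by simp [hP]⟩
    set δ := P.inf' hPne (fun p => dist p.1 p.2) with hδ
    have hδpos : 0 < δ := by
      rw [hδ, Finset.lt_inf'_iff]
      intro p hp
      rw [hP, Finset.mem_filter] at hp
      exact dist_pos.mpr hp.2
    have hforce : ∀ a b : Fin (n + 2), dist a b < δ → a = b := by
      intro a b hab
      by_contra hne'
      have : δ ≤ dist a b :=
        Finset.inf'_le _ (by simp [hP, hne'] : (a, b) ∈ P)
      linarith
    -- M is closed under +1
    have hstep : ∀ x ∈ M, x + 1 ∈ M := by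
      intro x hx
      obtain ⟨N, c, ⟨hN1, hc0, hcN, hch⟩, hmem⟩ := hICT x hx x hx δ hδpos
      have h1 : c 1 = x + 1 := by
        have := hforce _ _ (hch 0 (by omega))
        rw [hc0] at this; exact this.symm
      rw [← h1]; exact hmem 1 hN1
    have horbit : ∀ x ∈ M, ∀ k : ℕ, x + (k : Fin (n + 2)) ∈ M := by
      intro x hx k
      induction k with
      | zero => simpa using hx
      | succ m ih =>
        have : ((m + 1 : ℕ) : Fin (n+2)) = (m : Fin (n+2)) + 1 := by push_cast; ring
        rw [this, ← add_assoc]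
        exact hstep _ ih
    obtain ⟨x, hx⟩ := hne
    apply hproper
    ext z
    simp only [Set.mem_univ, iff_true]
    have := horbit x hx (z - x).val
    rwa [Fin.cast_val_eq_self, add_sub_cancel] at this
end
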